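/- arXiv:0706.0332 — 6 statements merged into one kernel-verified Lean document; each statement's English description precedes it below -/
import Mathlib

section
/- (Berger's lemma, pinched version.) Let R be an algebraic curvature tensor on ℝⁿ, let k > 0 and 0 ≤ δ, and assume the pinching condition: for all X, Y ∈ ℝⁿ, ((1+δ)/4)·k·(|X|²|Y|² − ⟨X,Y⟩²) ≤ R(X,Y,X,Y) ≤ (1−δ)·k·(|X|²|Y|² − ⟨X,Y⟩²). If X, Y, U, V ∈ ℝⁿ are linearly independent and Δ := ⟨X,U⟩⟨Y,V⟩ − ⟨X,V⟩⟨Y,U⟩ = 0, then 6·|R(X,Y,U,V)| ≤ ((3−5δ)/(5−3δ))·(2R(X,Y,X,Y) + 2R(U,V,U,V) + R(X,V,X,V) + R(V,Y,V,Y) + R(X,U,X,U) + R(U,Y,U,Y)). -/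
open Complex

noncomputable section

/-- An algebraic curvature tensor on `ℝⁿ`, given by its coefficients on the
standard basis, satisfying the usual symmetries and the first Bianchi identity.
(A multilinear map `(ℝⁿ)⁴ → ℝ` with these symmetries is equivalent to such data.) -/
structure AlgCurv (n : ℕ) where
  R : Fin n → Fin n → Fin n → Fin n → ℝ
  skew₁ : ∀ i j k l, R i j k l = - R j i k l
  skew₂ : ∀ i j k l, R i j k l = - R i j l k
  pair_symm : ∀ i j k l, R i j k l = R k l i j
  bianchi : ∀ i j k l, R i j k l + R j k i l + R k i j l = 0

namespace AlgCurv

variable {n : ℕ}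

/-- The multilinear map `(ℝⁿ)⁴ → ℝ` determined by the coefficients. -/
def evalR (T : AlgCurv n) (X Y U V : Fin n → ℝ) : ℝ :=
  ∑ i : Fin n, ∑ j : Fin n, ∑ k : Fin n, ∑ l : Fin n,
    T.R i j k l * X i * Y j * U k * V l

/-- The `ℂ`-multilinear extension to `ℂⁿ = Fin n → ℂ`. -/
def evalC (T : AlgCurv n) (Z W U V : Fin n → ℂ) : ℂ :=
  ∑ i : Fin n, ∑ j : Fin n, ∑ k : Fin n, ∑ l : Fin n,
    (T.R i j k l : ℂ) * Z i * W j * U k * V l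

end AlgCurv

/-- The standard (real) inner product on `ℝⁿ`. -/
def rInner {n : ℕ} (X Y : Fin n → ℝ) : ℝ := ∑ i : Fin n, X i * Y i

/-- The `ℂ`-bilinear (not hermitian) extension `⟨Z,W⟩ = Σᵢ Zᵢ Wᵢ`. -/
def cInner {n : ℕ} (Z W : Fin n → ℂ) : ℂ := ∑ i : Fin n, Z i * W i

/-- Entrywise complex conjugation. -/
def conjV {n : ℕ} (Z : Fin n → ℂ) : Fin n → ℂ := fun i => starRingEnd ℂ (Z i)

/-- `R` has nonnegative complex sectional curvature: `R(Z,W,Z̄,W̄)` is a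
nonnegative real number for all `Z, W ∈ ℂⁿ`. -/
def nonnegCSC {n : ℕ} (T : AlgCurv n) : Prop :=
  ∀ Z W : Fin n → ℂ, ∃ r : ℝ, 0 ≤ r ∧
    T.evalC Z W (conjV Z) (conjV W) = (r : ℂ)

/-- The complexified vector `X + iY`. -/
def cx {n : ℕ} (X Y : Fin n → ℝ) : Fin n → ℂ :=
  fun i => (X i : ℂ) + Complex.I * (Y i : ℂ)

/-- The `ℂ`-multilinear extension of the curvature tensor of constant curvature one,
`I(X,Y,Z,W) = ⟨X,Z⟩⟨Y,W⟩ − ⟨X,W⟩⟨Y,Z⟩`. -/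
def IC {n : ℕ} (Z W U V : Fin n → ℂ) : ℂ :=
  cInner Z U * cInner W V - cInner Z V * cInner W U

/-- The `p`-th standard basis vector of `ℂⁿ`. -/
def basisC {n : ℕ} (p : Fin n) : Fin n → ℂ := fun i => if i = p then 1 else 0

/-- Hamilton's reaction term `Q(R)`, evaluated on `(Z, W, U, V)`
(with `U = Z̄`, `V = W̄` in applications). -/
def Qr {n : ℕ} (T : AlgCurv n) (Z W U V : Fin n → ℂ) : ℂ :=
  (∑ p : Fin n, ∑ q : Fin n,
      T.evalC Z W (basisC p) (basisC q) * T.evalC U V (basisC p) (basisC q))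
  + 2 * (∑ p : Fin n, ∑ q : Fin n,
      T.evalC Z (basisC p) U (basisC q) * T.evalC W (basisC p) V (basisC q))
  - 2 * (∑ p : Fin n, ∑ q : Fin n,
      T.evalC Z (basisC p) V (basisC q) * T.evalC W (basisC p) U (basisC q))

/-- The `ℂ`-linear extension of a real matrix (endomorphism of `ℝⁿ`) acting on `ℂⁿ`. -/
def mulVecC {n : ℕ} (A : Matrix (Fin n) (Fin n) ℝ) (Z : Fin n → ℂ) : Fin n → ℂ :=
  fun i => ∑ j : Fin n, (A i j : ℂ) * Z j

/-- `(A ∧ id)(Z, W, Z̄, W̄)`. -/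
def wedgeId {n : ℕ} (A : Matrix (Fin n) (Fin n) ℝ) (Z W : Fin n → ℂ) : ℂ :=
  (1/2 : ℂ) * (cInner (mulVecC A Z) (conjV Z) * cInner W (conjV W)
             + cInner (mulVecC A W) (conjV W) * cInner Z (conjV Z))
  - (1/2 : ℂ) * (cInner (mulVecC A W) (conjV Z) * cInner Z (conjV W)
               + cInner (mulVecC A Z) (conjV W) * cInner W (conjV Z))

/-- The Ricci curvature of `R`, as a matrix:  `⟨Ric(R)(X), Y⟩ = Σ_p R(X, e_p, Y, e_p)`. -/
def ricM {n : ℕ} (T : AlgCurv n) : Matrix (Fin n) (Fin n) ℝ :=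
  Matrix.of fun i j => ∑ p : Fin n, T.R i p j p


section BergerAux
variable {n : ℕ}
namespace AlgCurv

lemma evalR_eq (T : AlgCurv n) (X Y U V : Fin n → ℝ) :
    T.evalR X Y U V = ∑ p : Fin n × Fin n × Fin n × Fin n,
      T.R p.1 p.2.1 p.2.2.1 p.2.2.2 * X p.1 * Y p.2.1 * U p.2.2.1 * V p.2.2.2 := by
  simp [evalR, Fintype.sum_prod_type]

lemma esk1 (T : AlgCurv n) (X Y U V : Fin n → ℝ) :
    T.evalR Y X U V = - T.evalR X Y U V := by
  rw [evalR_eq, evalR_eq, ← Finset.sum_neg_distrib]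
  exact Fintype.sum_bijective (fun p => (p.2.1, p.1, p.2.2))
    (Function.Involutive.bijective fun p => rfl) _ _
    (fun p => by rw [T.skew₁ p.2.1 p.1 p.2.2.1 p.2.2.2]; ring)

lemma esk2 (T : AlgCurv n) (X Y U V : Fin n → ℝ) :
    T.evalR X Y V U = - T.evalR X Y U V := by
  rw [evalR_eq, evalR_eq, ← Finset.sum_neg_distrib]
  exact Fintype.sum_bijective (fun p => (p.1, p.2.1, p.2.2.2, p.2.2.1))
    (Function.Involutive.bijective fun p => rfl) _ _
    (fun p => by rw [T.skew₂ p.1 p.2.1 p.2.2.2 p.2.2.1]; ring)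

lemma epair (T : AlgCurv n) (X Y U V : Fin n → ℝ) :
    T.evalR U V X Y = T.evalR X Y U V := by
  rw [evalR_eq, evalR_eq]
  exact Fintype.sum_bijective (fun p => (p.2.2.1, p.2.2.2, p.1, p.2.1))
    (Function.Involutive.bijective fun p => rfl) _ _
    (fun p => by rw [T.pair_symm p.1 p.2.1 p.2.2.1 p.2.2.2]; ring)

lemma ebianchi (T : AlgCurv n) (X Y U V : Fin n → ℝ) :
    T.evalR X Y U V + T.evalR Y U X V + T.evalR U X Y V = 0 := by
  rw [evalR_eq, evalR_eq, evalR_eq]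
  rw [show (∑ p : Fin n × Fin n × Fin n × Fin n,
      T.R p.1 p.2.1 p.2.2.1 p.2.2.2 * Y p.1 * U p.2.1 * X p.2.2.1 * V p.2.2.2)
      = ∑ p : Fin n × Fin n × Fin n × Fin n,
      T.R p.2.1 p.2.2.1 p.1 p.2.2.2 * X p.1 * Y p.2.1 * U p.2.2.1 * V p.2.2.2 from
    Fintype.sum_bijective (fun q => (q.2.2.1, q.1, q.2.1, q.2.2.2))
      (Function.bijective_iff_has_inverse.mpr
        ⟨fun b => (b.2.1, b.2.2.1, b.1, b.2.2.2), fun p => rfl, fun p => rfl⟩) _ _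
      (fun q => by ring)]
  rw [show (∑ p : Fin n × Fin n × Fin n × Fin n,
      T.R p.1 p.2.1 p.2.2.1 p.2.2.2 * U p.1 * X p.2.1 * Y p.2.2.1 * V p.2.2.2)
      = ∑ p : Fin n × Fin n × Fin n × Fin n,
      T.R p.2.2.1 p.1 p.2.1 p.2.2.2 * X p.1 * Y p.2.1 * U p.2.2.1 * V p.2.2.2 from
    Fintype.sum_bijective (fun q => (q.2.1, q.2.2.1, q.1, q.2.2.2))
      (Function.bijective_iff_has_inverse.mpr
        ⟨fun b => (b.2.2.1, b.1, b.2.1, b.2.2.2), fun p => rfl, fun p => rfl⟩) _ _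
      (fun q => by ring)]
  rw [← Finset.sum_add_distrib, ← Finset.sum_add_distrib]
  apply Finset.sum_eq_zero
  intro p _
  linear_combination (X p.1 * Y p.2.1 * U p.2.2.1 * V p.2.2.2) *
    T.bianchi p.1 p.2.1 p.2.2.1 p.2.2.2

lemma evalR_add1 (T : AlgCurv n) (X X' Y U V : Fin n → ℝ) :
    T.evalR (X + X') Y U V = T.evalR X Y U V + T.evalR X' Y U V := by
  simp only [evalR, Pi.add_apply, mul_add, add_mul, Finset.sum_add_distrib]
lemma evalR_sub1 (T : AlgCurv n) (X X' Y U V : Fin n → ℝ) :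
    T.evalR (X - X') Y U V = T.evalR X Y U V - T.evalR X' Y U V := by
  simp only [evalR, Pi.sub_apply, mul_sub, sub_mul, Finset.sum_sub_distrib]
lemma evalR_add2 (T : AlgCurv n) (X Y Y' U V : Fin n → ℝ) :
    T.evalR X (Y + Y') U V = T.evalR X Y U V + T.evalR X Y' U V := by
  simp only [evalR, Pi.add_apply, mul_add, add_mul, Finset.sum_add_distrib]
lemma evalR_sub2 (T : AlgCurv n) (X Y Y' U V : Fin n → ℝ) :
    T.evalR X (Y - Y') U V = T.evalR X Y U V - T.evalR X Y' U V := by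
  simp only [evalR, Pi.sub_apply, mul_sub, sub_mul, Finset.sum_sub_distrib]
lemma evalR_add3 (T : AlgCurv n) (X Y U U' V : Fin n → ℝ) :
    T.evalR X Y (U + U') V = T.evalR X Y U V + T.evalR X Y U' V := by
  simp only [evalR, Pi.add_apply, mul_add, add_mul, Finset.sum_add_distrib]
lemma evalR_sub3 (T : AlgCurv n) (X Y U U' V : Fin n → ℝ) :
    T.evalR X Y (U - U') V = T.evalR X Y U V - T.evalR X Y U' V := by
  simp only [evalR, Pi.sub_apply, mul_sub, sub_mul, Finset.sum_sub_distrib]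
lemma evalR_add4 (T : AlgCurv n) (X Y U V V' : Fin n → ℝ) :
    T.evalR X Y U (V + V') = T.evalR X Y U V + T.evalR X Y U V' := by
  simp only [evalR, Pi.add_apply, mul_add, add_mul, Finset.sum_add_distrib]
lemma evalR_sub4 (T : AlgCurv n) (X Y U V V' : Fin n → ℝ) :
    T.evalR X Y U (V - V') = T.evalR X Y U V - T.evalR X Y U V' := by
  simp only [evalR, Pi.sub_apply, mul_sub, sub_mul, Finset.sum_sub_distrib]

end AlgCurv

lemma rInner_add1 {n : ℕ} (X X' Y : Fin n → ℝ) :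
    rInner (X + X') Y = rInner X Y + rInner X' Y := by
  simp only [rInner, Pi.add_apply, add_mul, Finset.sum_add_distrib]
lemma rInner_sub1 {n : ℕ} (X X' Y : Fin n → ℝ) :
    rInner (X - X') Y = rInner X Y - rInner X' Y := by
  simp only [rInner, Pi.sub_apply, sub_mul, Finset.sum_sub_distrib]
lemma rInner_add2 {n : ℕ} (X Y Y' : Fin n → ℝ) :
    rInner X (Y + Y') = rInner X Y + rInner X Y' := by
  simp only [rInner, Pi.add_apply, mul_add, Finset.sum_add_distrib]
lemma rInner_sub2 {n : ℕ} (X Y Y' : Fin n → ℝ) :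
    rInner X (Y - Y') = rInner X Y - rInner X Y' := by
  simp only [rInner, Pi.sub_apply, mul_sub, Finset.sum_sub_distrib]
lemma rInner_comm {n : ℕ} (X Y : Fin n → ℝ) : rInner X Y = rInner Y X := by
  simp only [rInner, mul_comm]
lemma rInner_self_nonneg {n : ℕ} (X : Fin n → ℝ) : 0 ≤ rInner X X :=
  Finset.sum_nonneg fun i _ => mul_self_nonneg _
lemma rInner_self_eq_zero {n : ℕ} {X : Fin n → ℝ} (h : rInner X X = 0) : X = 0 := by
  funext i
  exact (Finset.sum_mul_self_eq_zero_iff Finset.univ X).1 h i (Finset.mem_univ i)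

end BergerAux

set_option maxHeartbeats 2000000 in
/-- Berger's lemma, pinched version. -/
theorem berger_pinched {n : ℕ} (T : AlgCurv n) (k δ : ℝ) (hk : 0 < k) (hδ : 0 ≤ δ)
    (hpinch : ∀ X Y : Fin n → ℝ,
      (1 + δ) / 4 * k * (rInner X X * rInner Y Y - rInner X Y ^ 2) ≤ T.evalR X Y X Y ∧
      T.evalR X Y X Y ≤ (1 - δ) * k * (rInner X X * rInner Y Y - rInner X Y ^ 2))
    (X Y U V : Fin n → ℝ) (hli : LinearIndependent ℝ ![X, Y, U, V])
    (hΔ : rInner X U * rInner Y V - rInner X V * rInner Y U = 0) :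
    6 * |T.evalR X Y U V| ≤
      (3 - 5 * δ) / (5 - 3 * δ) *
        (2 * T.evalR X Y X Y + 2 * T.evalR U V U V + T.evalR X V X V
          + T.evalR V Y V Y + T.evalR X U X U + T.evalR U Y U Y) := by
  classical
  -- X, Y are linearly independent
  have hpair : LinearIndependent ℝ ![X, Y] := by
    have h2 := hli.comp (![0, 1] : Fin 2 → Fin 4) (by decide)
    have h3 : (![X, Y, U, V] ∘ (![0, 1] : Fin 2 → Fin 4)) = ![X, Y] := by
      funext i; fin_cases i <;> rfl
    rwa [h3] at h2
  have hYne : Y ≠ 0 := by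
    intro h
    exact hpair.ne_zero 1 (by simp [h])
  have hYY : 0 < rInner Y Y := by
    rcases (rInner_self_nonneg Y).lt_or_eq with h | h
    · exact h
    · exact absurd (rInner_self_eq_zero h.symm) hYne
  -- |X ∧ Y|² > 0
  have hW : rInner (rInner Y Y • X - rInner X Y • Y) (rInner Y Y • X - rInner X Y • Y)
      = rInner Y Y * (rInner X X * rInner Y Y - rInner X Y ^ 2) := by
    simp only [rInner, Pi.sub_apply, Pi.smul_apply, smul_eq_mul]
    rw [Finset.sum_congr rfl fun i _ =>
      show ((∑ j : Fin n, Y j * Y j) * X i - (∑ j : Fin n, X j * Y j) * Y i) *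
            ((∑ j : Fin n, Y j * Y j) * X i - (∑ j : Fin n, X j * Y j) * Y i)
          = (∑ j : Fin n, Y j * Y j) * (∑ j : Fin n, Y j * Y j) * (X i * X i)
            - 2 * ((∑ j : Fin n, Y j * Y j) * (∑ j : Fin n, X j * Y j)) * (X i * Y i)
            + (∑ j : Fin n, X j * Y j) * (∑ j : Fin n, X j * Y j) * (Y i * Y i) from by ring]
    simp only [Finset.sum_add_distrib, Finset.sum_sub_distrib, ← Finset.mul_sum]
    ring
  have hLXY : 0 < rInner X X * rInner Y Y - rInner X Y ^ 2 := by
    have hWnn := rInner_self_nonneg (rInner Y Y • X - rInner X Y • Y)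
    have hge : 0 ≤ rInner X X * rInner Y Y - rInner X Y ^ 2 := by nlinarith [hW, hWnn, hYY]
    rcases hge.lt_or_eq with h | h
    · exact h
    · exfalso
      have hW0 : rInner (rInner Y Y • X - rInner X Y • Y) (rInner Y Y • X - rInner X Y • Y) = 0 := by
        rw [hW, ← h]; ring
      have hWz := rInner_self_eq_zero hW0
      have hcoef := (LinearIndependent.pair_iff.1 hpair (rInner Y Y) (-(rInner X Y))
        (by rw [neg_smul, ← sub_eq_add_neg]; exact hWz)).1
      exact hYY.ne' hcoef
  have hδ35 : δ ≤ 3 / 5 := by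
    have h1 := (hpinch X Y).1
    have h2 := (hpinch X Y).2
    nlinarith [mul_pos hk hLXY]
  -- curvature polarization identities
  have hsymm : ∀ A B C D : Fin n → ℝ,
      T.evalR A B C D = T.evalR C D A B := fun A B C D => (AlgCurv.epair T A B C D).symm
  have hI1 : T.evalR (X+U) (Y-V) (X+U) (Y-V) + T.evalR (X-U) (Y+V) (X-U) (Y+V)
      + T.evalR (X+V) (Y+U) (X+V) (Y+U) + T.evalR (X-V) (Y-U) (X-V) (Y-U)
      = 2 * (2 * T.evalR X Y X Y + 2 * T.evalR U V U V + T.evalR X V X V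
          + T.evalR V Y V Y + T.evalR X U X U + T.evalR U Y U Y)
        - 12 * T.evalR X Y U V := by
    simp only [AlgCurv.evalR_add1, AlgCurv.evalR_sub1, AlgCurv.evalR_add2, AlgCurv.evalR_sub2,
      AlgCurv.evalR_add3, AlgCurv.evalR_sub3, AlgCurv.evalR_add4, AlgCurv.evalR_sub4]
    linarith [AlgCurv.epair T X Y X V, AlgCurv.epair T X Y U Y, AlgCurv.epair T X Y U V,
      AlgCurv.epair T X V U Y, AlgCurv.epair T X V U V, AlgCurv.epair T U Y U V,
      AlgCurv.epair T X Y X U, AlgCurv.epair T X Y V Y, AlgCurv.epair T X Y V U,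
      AlgCurv.epair T X U V Y, AlgCurv.epair T X U V U, AlgCurv.epair T V Y V U,
      AlgCurv.esk2 T X Y U V, AlgCurv.esk1 T U V V U, AlgCurv.esk2 T U V U V,
      AlgCurv.ebianchi T X Y U V, AlgCurv.epair T X V Y U, AlgCurv.esk2 T X V U Y,
      AlgCurv.esk1 T X U Y V, AlgCurv.esk2 T X U V Y]
  have hI2 : T.evalR (X+U) (Y+V) (X+U) (Y+V) + T.evalR (X-U) (Y-V) (X-U) (Y-V)
      + T.evalR (X+V) (Y-U) (X+V) (Y-U) + T.evalR (X-V) (Y+U) (X-V) (Y+U)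
      = 2 * (2 * T.evalR X Y X Y + 2 * T.evalR U V U V + T.evalR X V X V
          + T.evalR V Y V Y + T.evalR X U X U + T.evalR U Y U Y)
        + 12 * T.evalR X Y U V := by
    simp only [AlgCurv.evalR_add1, AlgCurv.evalR_sub1, AlgCurv.evalR_add2, AlgCurv.evalR_sub2,
      AlgCurv.evalR_add3, AlgCurv.evalR_sub3, AlgCurv.evalR_add4, AlgCurv.evalR_sub4]
    linarith [AlgCurv.epair T X Y X V, AlgCurv.epair T X Y U Y, AlgCurv.epair T X Y U V,
      AlgCurv.epair T X V U Y, AlgCurv.epair T X V U V, AlgCurv.epair T U Y U V,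
      AlgCurv.epair T X Y X U, AlgCurv.epair T X Y V Y, AlgCurv.epair T X Y V U,
      AlgCurv.epair T X U V Y, AlgCurv.epair T X U V U, AlgCurv.epair T V Y V U,
      AlgCurv.esk2 T X Y U V, AlgCurv.esk1 T U V V U, AlgCurv.esk2 T U V U V,
      AlgCurv.ebianchi T X Y U V, AlgCurv.epair T X V Y U, AlgCurv.esk2 T X V U Y,
      AlgCurv.esk1 T X U Y V, AlgCurv.esk2 T X U V Y]
  -- inner product polarization identities
  have hJ1 : (rInner (X+U) (X+U) * rInner (Y-V) (Y-V) - rInner (X+U) (Y-V) ^ 2)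
      + (rInner (X-U) (X-U) * rInner (Y+V) (Y+V) - rInner (X-U) (Y+V) ^ 2)
      + (rInner (X+V) (X+V) * rInner (Y+U) (Y+U) - rInner (X+V) (Y+U) ^ 2)
      + (rInner (X-V) (X-V) * rInner (Y-U) (Y-U) - rInner (X-V) (Y-U) ^ 2)
      = 2 * (2 * (rInner X X * rInner Y Y - rInner X Y ^ 2)
          + 2 * (rInner U U * rInner V V - rInner U V ^ 2)
          + (rInner X X * rInner V V - rInner X V ^ 2)
          + (rInner V V * rInner Y Y - rInner Y V ^ 2)
          + (rInner X X * rInner U U - rInner X U ^ 2)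
          + (rInner U U * rInner Y Y - rInner Y U ^ 2)) := by
    simp only [rInner_add1, rInner_sub1, rInner_add2, rInner_sub2]
    rw [rInner_comm U X, rInner_comm V X, rInner_comm V U, rInner_comm V Y, rInner_comm U Y]
    linear_combination (-12 : ℝ) * hΔ
  have hJ2 : (rInner (X+U) (X+U) * rInner (Y+V) (Y+V) - rInner (X+U) (Y+V) ^ 2)
      + (rInner (X-U) (X-U) * rInner (Y-V) (Y-V) - rInner (X-U) (Y-V) ^ 2)
      + (rInner (X+V) (X+V) * rInner (Y-U) (Y-U) - rInner (X+V) (Y-U) ^ 2)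
      + (rInner (X-V) (X-V) * rInner (Y+U) (Y+U) - rInner (X-V) (Y+U) ^ 2)
      = 2 * (2 * (rInner X X * rInner Y Y - rInner X Y ^ 2)
          + 2 * (rInner U U * rInner V V - rInner U V ^ 2)
          + (rInner X X * rInner V V - rInner X V ^ 2)
          + (rInner V V * rInner Y Y - rInner Y V ^ 2)
          + (rInner X X * rInner U U - rInner X U ^ 2)
          + (rInner U U * rInner Y Y - rInner Y U ^ 2)) := by
    simp only [rInner_add1, rInner_sub1, rInner_add2, rInner_sub2]
    rw [rInner_comm U X, rInner_comm V X, rInner_comm V U, rInner_comm V Y, rInner_comm U Y]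
    linear_combination (12 : ℝ) * hΔ
  obtain ⟨QS, hQSdef⟩ : ∃ q : ℝ, 2 * T.evalR X Y X Y + 2 * T.evalR U V U V + T.evalR X V X V
      + T.evalR V Y V Y + T.evalR X U X U + T.evalR U Y U Y = q := ⟨_, rfl⟩
  obtain ⟨R0, hR0def⟩ : ∃ r : ℝ, T.evalR X Y U V = r := ⟨_, rfl⟩
  obtain ⟨LS, hLSdef⟩ : ∃ l : ℝ, 2 * (rInner X X * rInner Y Y - rInner X Y ^ 2)
      + 2 * (rInner U U * rInner V V - rInner U V ^ 2)
      + (rInner X X * rInner V V - rInner X V ^ 2)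
      + (rInner V V * rInner Y Y - rInner Y V ^ 2)
      + (rInner X X * rInner U U - rInner X U ^ 2)
      + (rInner U U * rInner Y Y - rInner Y U ^ 2) = l := ⟨_, rfl⟩
  rw [hQSdef, hR0def] at hI1 hI2
  rw [hLSdef] at hJ1 hJ2
  rw [hQSdef, hR0def]
  have key1 : (1 + δ) / 4 * k * (2 * LS) ≤ 2 * QS - 12 * R0 := by
    rw [← hI1, ← hJ1]
    linarith [(hpinch (X+U) (Y-V)).1, (hpinch (X-U) (Y+V)).1,
      (hpinch (X+V) (Y+U)).1, (hpinch (X-V) (Y-U)).1]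
  have key2 : 2 * QS + 12 * R0 ≤ (1 - δ) * k * (2 * LS) := by
    rw [← hI2, ← hJ2]
    linarith [(hpinch (X+U) (Y+V)).2, (hpinch (X-U) (Y-V)).2,
      (hpinch (X+V) (Y-U)).2, (hpinch (X-V) (Y+U)).2]
  have key3 : (1 + δ) / 4 * k * (2 * LS) ≤ 2 * QS + 12 * R0 := by
    rw [← hI2, ← hJ2]
    linarith [(hpinch (X+U) (Y+V)).1, (hpinch (X-U) (Y-V)).1,
      (hpinch (X+V) (Y-U)).1, (hpinch (X-V) (Y+U)).1]
  have key4 : 2 * QS - 12 * R0 ≤ (1 - δ) * k * (2 * LS) := by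
    rw [← hI1, ← hJ1]
    linarith [(hpinch (X+U) (Y-V)).2, (hpinch (X-U) (Y+V)).2,
      (hpinch (X+V) (Y+U)).2, (hpinch (X-V) (Y-U)).2]
  have hc1 : (0:ℝ) ≤ (1 + δ) / 4 * k := by positivity
  have hc2 : (0:ℝ) ≤ (1 - δ) * k := by nlinarith
  have habs1 : 12 * ((1 + δ) / 4 * k + (1 - δ) * k) * R0
      ≤ 2 * ((1 - δ) * k - (1 + δ) / 4 * k) * QS := by
    have m1 := mul_le_mul_of_nonneg_left key1 hc2
    have m2 := mul_le_mul_of_nonneg_left key2 hc1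
    nlinarith [m1, m2]
  have habs2 : -(12 * ((1 + δ) / 4 * k + (1 - δ) * k) * R0)
      ≤ 2 * ((1 - δ) * k - (1 + δ) / 4 * k) * QS := by
    have m1 := mul_le_mul_of_nonneg_left key3 hc2
    have m2 := mul_le_mul_of_nonneg_left key4 hc1
    nlinarith [m1, m2]
  have h53 : (0:ℝ) < 5 - 3 * δ := by linarith
  rw [div_mul_eq_mul_div, le_div_iff₀ h53]
  rcases abs_cases R0 with ⟨he, _⟩ | ⟨he, _⟩ <;> rw [he] <;> nlinarith [habs1, habs2, hk]
end
end

section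
/- (Second variation at a null complex section, full form.) Let R be an algebraic curvature tensor on ℝⁿ with nonnegative complex sectional curvature, and suppose Z, W ∈ ℂⁿ satisfy R(Z, W, Z̄, W̄) = 0. Then for all Z₁, W₁ ∈ ℂⁿ, the quantity R(Z₁,W₁,Z̄,W̄) + R(Z₁,W,Z̄₁,W̄) + R(Z₁,W,Z̄,W̄₁) + R(Z,W₁,Z̄₁,W̄) + R(Z,W₁,Z̄,W̄₁) + R(Z,W,Z̄₁,W̄₁) is a real number and is ≥ 0. -/
open Complex

noncomputable section

lemma conjV_add_smul {n : ℕ} (c : ℂ) (Z Z₁ : Fin n → ℂ) :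
    conjV (Z + c • Z₁) = conjV Z + (starRingEnd ℂ c) • conjV Z₁ := by
  funext i
  simp [conjV]

lemma evalC_expand {n : ℕ} (T : AlgCurv n) (Z W U V Z₁ W₁ U₁ V₁ : Fin n → ℂ) (t : ℂ) :
    T.evalC (Z + t • Z₁) (W + t • W₁) (U + t • U₁) (V + t • V₁)
      + T.evalC (Z + (-t) • Z₁) (W + (-t) • W₁) (U + (-t) • U₁) (V + (-t) • V₁)
    = 2 * T.evalC Z W U V
      + 2 * t ^ 2 * (T.evalC Z₁ W₁ U V + T.evalC Z₁ W U₁ V + T.evalC Z₁ W U V₁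
          + T.evalC Z W₁ U₁ V + T.evalC Z W₁ U V₁ + T.evalC Z W U₁ V₁)
      + 2 * t ^ 4 * T.evalC Z₁ W₁ U₁ V₁ := by
  simp only [AlgCurv.evalC, Pi.add_apply, Pi.smul_apply, smul_eq_mul, Finset.mul_sum,
    ← Finset.sum_add_distrib]
  refine Finset.sum_congr rfl fun i _ => Finset.sum_congr rfl fun j _ =>
    Finset.sum_congr rfl fun k _ => Finset.sum_congr rfl fun l _ => ?_
  ring

/-- second variation at a null complex section, full form. -/
theorem second_variation_full {n : ℕ} (T : AlgCurv n) (hT : nonnegCSC T)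
    (Z W : Fin n → ℂ) (h0 : T.evalC Z W (conjV Z) (conjV W) = 0)
    (Z₁ W₁ : Fin n → ℂ) :
    ∃ r : ℝ, 0 ≤ r ∧
      T.evalC Z₁ W₁ (conjV Z) (conjV W) + T.evalC Z₁ W (conjV Z₁) (conjV W)
        + T.evalC Z₁ W (conjV Z) (conjV W₁) + T.evalC Z W₁ (conjV Z₁) (conjV W)
        + T.evalC Z W₁ (conjV Z) (conjV W₁) + T.evalC Z W (conjV Z₁) (conjV W₁)
        = (r : ℂ) := by
  set S : ℂ := T.evalC Z₁ W₁ (conjV Z) (conjV W) + T.evalC Z₁ W (conjV Z₁) (conjV W)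
        + T.evalC Z₁ W (conjV Z) (conjV W₁) + T.evalC Z W₁ (conjV Z₁) (conjV W)
        + T.evalC Z W₁ (conjV Z) (conjV W₁) + T.evalC Z W (conjV Z₁) (conjV W₁) with hSdef
  set A : ℂ := T.evalC Z₁ W₁ (conjV Z₁) (conjV W₁) with hAdef
  -- key: for each real t, t²S + t⁴A is a nonnegative real
  have key : ∀ t : ℝ, ∃ g : ℝ, 0 ≤ g ∧ (t : ℂ) ^ 2 * S + (t : ℂ) ^ 4 * A = (g : ℂ) := by
    intro t
    obtain ⟨r₁, hr₁, e₁⟩ := hT (Z + (t : ℂ) • Z₁) (W + (t : ℂ) • W₁)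
    obtain ⟨r₂, hr₂, e₂⟩ := hT (Z + (-(t : ℂ)) • Z₁) (W + (-(t : ℂ)) • W₁)
    rw [conjV_add_smul, conjV_add_smul] at e₁ e₂
    simp only [Complex.conj_ofReal, map_neg] at e₁ e₂
    have hsum := evalC_expand T Z W (conjV Z) (conjV W) Z₁ W₁ (conjV Z₁) (conjV W₁) (t : ℂ)
    rw [e₁, e₂, h0] at hsum
    refine ⟨(r₁ + r₂) / 2, by positivity, ?_⟩
    push_cast
    rw [hSdef, hAdef]
    linear_combination -hsum / 2
  obtain ⟨g₁, hg₁, eq₁⟩ := key 1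
  obtain ⟨g₂, hg₂, eq₂⟩ := key 2
  push_cast at eq₁ eq₂
  set s : ℝ := (16 * g₁ - g₂) / 12 with hsdef
  set a : ℝ := g₁ - s with hadef
  have hS : S = (s : ℝ) := by
    push_cast [hsdef]
    linear_combination (16 / 12 : ℂ) * eq₁ - (1 / 12 : ℂ) * eq₂
  have hA : A = (a : ℝ) := by
    push_cast [hadef]
    linear_combination eq₁ - hS
  have hC : ∀ t : ℝ, 0 ≤ s * t ^ 2 + a * t ^ 4 := by
    intro t
    obtain ⟨g, hg, eq⟩ := key t
    rw [hS, hA] at eq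
    have h2 : ((s * t ^ 2 + a * t ^ 4 : ℝ) : ℂ) = (g : ℝ) := by
      push_cast
      linear_combination eq
    have h3 : s * t ^ 2 + a * t ^ 4 = g := by exact_mod_cast h2
    linarith
  have hs : 0 ≤ s := by
    by_contra hs
    push_neg at hs
    set t : ℝ := Real.sqrt ((-s) / (|a| + 1)) with htdef
    have hpos : (0 : ℝ) < |a| + 1 := by positivity
    have ht2 : t ^ 2 = (-s) / (|a| + 1) := by
      rw [htdef, Real.sq_sqrt (div_nonneg (by linarith) (by positivity))]
    have habs : a ≤ |a| := le_abs_self a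
    have h := hC t
    rw [show t ^ 4 = (t ^ 2) ^ 2 by ring, ht2] at h
    have hs2 : 0 < s ^ 2 := by nlinarith
    have hmul : 0 ≤ (s * (-s / (|a| + 1)) + a * (-s / (|a| + 1)) ^ 2) * (|a| + 1) ^ 2 :=
      mul_nonneg h (by positivity)
    have heq : (s * (-s / (|a| + 1)) + a * (-s / (|a| + 1)) ^ 2) * (|a| + 1) ^ 2
        = s ^ 2 * (a - |a| - 1) := by
      field_simp
      ring
    nlinarith [mul_pos hs2 (show (0:ℝ) < |a| + 1 - a by linarith)]
  exact ⟨s, hs, hS⟩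
end
end

section
/- (Second variation at a null complex section, symmetrized form.) Let R be an algebraic curvature tensor on ℝⁿ with nonnegative complex sectional curvature, and suppose Z, W ∈ ℂⁿ satisfy R(Z, W, Z̄, W̄) = 0. Then for all Z₁, W₁ ∈ ℂⁿ, 0 ≤ R(Z₁, W, Z̄₁, W̄) + R(Z, W₁, Z̄, W̄₁) + 2·Re(R(Z, W₁, Z̄₁, W̄)). -/
open Complex

noncomputable section

namespace AlgCurv
variable {n : ℕ} (T : AlgCurv n)

lemma sum4_congr {f g : Fin n → Fin n → Fin n → Fin n → ℂ}
    (h : ∀ i j k l, f i j k l = g i j k l) :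
    (∑ i : Fin n, ∑ j : Fin n, ∑ k : Fin n, ∑ l : Fin n, f i j k l)
      = ∑ i : Fin n, ∑ j : Fin n, ∑ k : Fin n, ∑ l : Fin n, g i j k l := by
  simp only [h]

lemma evalC_add₁ (X X' Y U V : Fin n → ℂ) :
    T.evalC (X + X') Y U V = T.evalC X Y U V + T.evalC X' Y U V := by
  simp only [evalC, ← Finset.sum_add_distrib]
  exact sum4_congr fun i j k l => by simp only [Pi.add_apply]; ring

lemma evalC_add₂ (X Y Y' U V : Fin n → ℂ) :
    T.evalC X (Y + Y') U V = T.evalC X Y U V + T.evalC X Y' U V := by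
  simp only [evalC, ← Finset.sum_add_distrib]
  exact sum4_congr fun i j k l => by simp only [Pi.add_apply]; ring

lemma evalC_add₃ (X Y U U' V : Fin n → ℂ) :
    T.evalC X Y (U + U') V = T.evalC X Y U V + T.evalC X Y U' V := by
  simp only [evalC, ← Finset.sum_add_distrib]
  exact sum4_congr fun i j k l => by simp only [Pi.add_apply]; ring

lemma evalC_add₄ (X Y U V V' : Fin n → ℂ) :
    T.evalC X Y U (V + V') = T.evalC X Y U V + T.evalC X Y U V' := by
  simp only [evalC, ← Finset.sum_add_distrib]
  exact sum4_congr fun i j k l => by simp only [Pi.add_apply]; ring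

lemma evalC_smul₁ (a : ℂ) (X Y U V : Fin n → ℂ) :
    T.evalC (a • X) Y U V = a * T.evalC X Y U V := by
  simp only [evalC, Finset.mul_sum]
  exact sum4_congr fun i j k l => by simp only [Pi.smul_apply, smul_eq_mul]; ring

lemma evalC_smul₂ (a : ℂ) (X Y U V : Fin n → ℂ) :
    T.evalC X (a • Y) U V = a * T.evalC X Y U V := by
  simp only [evalC, Finset.mul_sum]
  exact sum4_congr fun i j k l => by simp only [Pi.smul_apply, smul_eq_mul]; ring

lemma evalC_smul₃ (a : ℂ) (X Y U V : Fin n → ℂ) :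
    T.evalC X Y (a • U) V = a * T.evalC X Y U V := by
  simp only [evalC, Finset.mul_sum]
  exact sum4_congr fun i j k l => by simp only [Pi.smul_apply, smul_eq_mul]; ring

lemma evalC_smul₄ (a : ℂ) (X Y U V : Fin n → ℂ) :
    T.evalC X Y U (a • V) = a * T.evalC X Y U V := by
  simp only [evalC, Finset.mul_sum]
  exact sum4_congr fun i j k l => by simp only [Pi.smul_apply, smul_eq_mul]; ring

lemma evalC_conj (A B C D : Fin n → ℂ) :
    starRingEnd ℂ (T.evalC A B C D)
      = T.evalC (conjV A) (conjV B) (conjV C) (conjV D) := by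
  simp only [evalC, map_sum, map_mul, Complex.conj_ofReal, conjV]

lemma sum4_swap (f : Fin n → Fin n → Fin n → Fin n → ℂ) :
    (∑ i : Fin n, ∑ j : Fin n, ∑ k : Fin n, ∑ l : Fin n, f i j k l)
      = ∑ k : Fin n, ∑ l : Fin n, ∑ i : Fin n, ∑ j : Fin n, f i j k l := by
  calc (∑ i : Fin n, ∑ j : Fin n, ∑ k : Fin n, ∑ l : Fin n, f i j k l)
      = ∑ i : Fin n, ∑ k : Fin n, ∑ j : Fin n, ∑ l : Fin n, f i j k l :=
        Finset.sum_congr rfl fun i _ => Finset.sum_comm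
    _ = ∑ k : Fin n, ∑ i : Fin n, ∑ j : Fin n, ∑ l : Fin n, f i j k l :=
        Finset.sum_comm
    _ = ∑ k : Fin n, ∑ i : Fin n, ∑ l : Fin n, ∑ j : Fin n, f i j k l :=
        Finset.sum_congr rfl fun k _ => Finset.sum_congr rfl fun i _ =>
          Finset.sum_comm
    _ = ∑ k : Fin n, ∑ l : Fin n, ∑ i : Fin n, ∑ j : Fin n, f i j k l :=
        Finset.sum_congr rfl fun k _ => Finset.sum_comm

lemma evalC_pair (A B C D : Fin n → ℂ) :
    T.evalC A B C D = T.evalC C D A B := by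
  unfold evalC
  rw [show (∑ i : Fin n, ∑ j : Fin n, ∑ k : Fin n, ∑ l : Fin n,
      (T.R i j k l : ℂ) * A i * B j * C k * D l)
    = ∑ i : Fin n, ∑ j : Fin n, ∑ k : Fin n, ∑ l : Fin n,
      (T.R k l i j : ℂ) * A i * B j * C k * D l from
    sum4_congr fun i j k l => by rw [T.pair_symm i j k l]]
  rw [sum4_swap (fun i j k l => (T.R k l i j : ℂ) * A i * B j * C k * D l)]
  exact sum4_congr fun k l i j => by ring

end AlgCurv

lemma quad_nonneg' {a b : ℝ} (h : ∀ t : ℝ, 0 ≤ a * t ^ 2 + b * t ^ 4) : 0 ≤ a := by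
  by_contra ha
  push_neg at ha
  rcases le_or_gt b 0 with hb | hb
  · have h1 := h 1
    nlinarith
  · have hm0 : 0 < -a / (2 * b) := div_pos (by linarith) (by linarith)
    have h2 : Real.sqrt (-a / (2 * b)) ^ 2 = -a / (2 * b) := Real.sq_sqrt hm0.le
    have h4 : Real.sqrt (-a / (2 * b)) ^ 4 = (-a / (2 * b)) ^ 2 := by
      rw [show (4 : ℕ) = 2 * 2 from rfl, pow_mul, h2]
    have ht := h (Real.sqrt (-a / (2 * b)))
    rw [h2, h4] at ht
    have hbm : b * (-a / (2 * b)) = -a / 2 := by field_simp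
    have key : b * (-a / (2 * b)) ^ 2 = (-a / 2) * (-a / (2 * b)) := by
      rw [pow_two, ← mul_assoc, hbm]
    nlinarith [mul_pos hm0 hm0]

lemma conjV_add_smul_s6 {n : ℕ} (V V' : Fin n → ℂ) (t : ℝ) :
    conjV (V + (t : ℂ) • V') = conjV V + (t : ℂ) • conjV V' := by
  funext i
  simp [conjV, Complex.conj_ofReal]

/-- The symmetrized second-variation coefficient. -/
def c2term {n : ℕ} (T : AlgCurv n) (Z W Z₁ W₁ : Fin n → ℂ) : ℂ :=
  T.evalC Z₁ W (conjV Z₁) (conjV W) + T.evalC Z W₁ (conjV Z) (conjV W₁)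
    + T.evalC Z W₁ (conjV Z₁) (conjV W) + T.evalC Z₁ W (conjV Z) (conjV W₁)
    + T.evalC Z₁ W₁ (conjV Z) (conjV W) + T.evalC Z W (conjV Z₁) (conjV W₁)

def c1term {n : ℕ} (T : AlgCurv n) (Z W Z₁ W₁ : Fin n → ℂ) : ℂ :=
  T.evalC Z₁ W (conjV Z) (conjV W) + T.evalC Z W₁ (conjV Z) (conjV W)
    + T.evalC Z W (conjV Z₁) (conjV W) + T.evalC Z W (conjV Z) (conjV W₁)

def c3term {n : ℕ} (T : AlgCurv n) (Z W Z₁ W₁ : Fin n → ℂ) : ℂ :=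
  T.evalC Z₁ W₁ (conjV Z₁) (conjV W) + T.evalC Z₁ W₁ (conjV Z) (conjV W₁)
    + T.evalC Z₁ W (conjV Z₁) (conjV W₁) + T.evalC Z W₁ (conjV Z₁) (conjV W₁)

def c4term {n : ℕ} (T : AlgCurv n) (Z W Z₁ W₁ : Fin n → ℂ) : ℂ :=
  T.evalC Z₁ W₁ (conjV Z₁) (conjV W₁)

lemma key_expand {n : ℕ} (T : AlgCurv n) (Z W : Fin n → ℂ)
    (h0 : T.evalC Z W (conjV Z) (conjV W) = 0) (Z₁ W₁ : Fin n → ℂ) (t : ℝ) :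
    T.evalC (Z + (t : ℂ) • Z₁) (W + (t : ℂ) • W₁)
        (conjV (Z + (t : ℂ) • Z₁)) (conjV (W + (t : ℂ) • W₁))
      = ((t : ℝ) : ℂ) * c1term T Z W Z₁ W₁ + ((t ^ 2 : ℝ) : ℂ) * c2term T Z W Z₁ W₁
        + ((t ^ 3 : ℝ) : ℂ) * c3term T Z W Z₁ W₁
        + ((t ^ 4 : ℝ) : ℂ) * c4term T Z W Z₁ W₁ := by
  rw [conjV_add_smul_s6 Z Z₁ t, conjV_add_smul_s6 W W₁ t]
  simp only [AlgCurv.evalC_add₁, AlgCurv.evalC_add₂, AlgCurv.evalC_add₃,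
    AlgCurv.evalC_add₄, AlgCurv.evalC_smul₁, AlgCurv.evalC_smul₂,
    AlgCurv.evalC_smul₃, AlgCurv.evalC_smul₄, c1term, c2term, c3term, c4term]
  push_cast
  linear_combination h0

lemma key_nonneg {n : ℕ} (T : AlgCurv n) (hT : nonnegCSC T) (Z W : Fin n → ℂ)
    (h0 : T.evalC Z W (conjV Z) (conjV W) = 0) (Z₁ W₁ : Fin n → ℂ) :
    0 ≤ (c2term T Z W Z₁ W₁).re := by
  have hpoly : ∀ t : ℝ, 0 ≤ (c1term T Z W Z₁ W₁).re * t
      + (c2term T Z W Z₁ W₁).re * t ^ 2 + (c3term T Z W Z₁ W₁).re * t ^ 3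
      + (c4term T Z W Z₁ W₁).re * t ^ 4 := by
    intro t
    obtain ⟨r, hr, hre⟩ := hT (Z + (t : ℂ) • Z₁) (W + (t : ℂ) • W₁)
    rw [key_expand T Z W h0 Z₁ W₁ t] at hre
    have h := congrArg Complex.re hre
    simp only [Complex.add_re, Complex.re_ofReal_mul, Complex.ofReal_re] at h
    nlinarith [hr]
  have heven : ∀ t : ℝ, 0 ≤ 2 * (c2term T Z W Z₁ W₁).re * t ^ 2
      + 2 * (c4term T Z W Z₁ W₁).re * t ^ 4 := by
    intro t
    have h1 := hpoly t
    have h2 := hpoly (-t)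
    nlinarith [h1, h2]
  have := quad_nonneg' heven
  linarith

/-- second variation at a null complex section, symmetrized form. -/
theorem second_variation_symmetrized {n : ℕ} (T : AlgCurv n) (hT : nonnegCSC T)
    (Z W : Fin n → ℂ) (h0 : T.evalC Z W (conjV Z) (conjV W) = 0)
    (Z₁ W₁ : Fin n → ℂ) :
    0 ≤ (T.evalC Z₁ W (conjV Z₁) (conjV W)).re + (T.evalC Z W₁ (conjV Z) (conjV W₁)).re
        + 2 * (T.evalC Z W₁ (conjV Z₁) (conjV W)).re := by
  have h1 := key_nonneg T hT Z W h0 Z₁ W₁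
  have h2 := key_nonneg T hT Z W h0 (Complex.I • Z₁) (Complex.I • W₁)
  have hcI : ∀ V : Fin n → ℂ, conjV (Complex.I • V) = (-Complex.I) • conjV V := by
    intro V; funext i; simp [conjV]
  have hII : ∀ A : ℂ, Complex.I * (-Complex.I * A) = A := fun A => by
    linear_combination (-A) * Complex.I_sq
  have hII' : ∀ A : ℂ, Complex.I * (Complex.I * A) = -A := fun A => by
    linear_combination A * Complex.I_sq
  have hII'' : ∀ A : ℂ, -Complex.I * (-Complex.I * A) = -A := fun A => by
    linear_combination A * Complex.I_sq
  have hII₃ : ∀ A : ℂ, -Complex.I * (Complex.I * A) = A := fun A => by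
    linear_combination (-A) * Complex.I_sq
  simp only [c2term, hcI, AlgCurv.evalC_smul₁, AlgCurv.evalC_smul₂,
    AlgCurv.evalC_smul₃, AlgCurv.evalC_smul₄, hII, hII', hII'', hII₃] at h1 h2
  simp only [Complex.add_re, Complex.neg_re] at h1 h2
  have hsym : (T.evalC Z₁ W (conjV Z) (conjV W₁)).re
      = (T.evalC Z W₁ (conjV Z₁) (conjV W)).re := by
    have hc : starRingEnd ℂ (T.evalC Z W₁ (conjV Z₁) (conjV W))
        = T.evalC Z₁ W (conjV Z) (conjV W₁) := by
      rw [T.evalC_conj]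
      have e2 : conjV (conjV Z₁) = Z₁ := by funext i; simp [conjV]
      have e3 : conjV (conjV W) = W := by funext i; simp [conjV]
      rw [e2, e3, T.evalC_pair]
    rw [← hc, Complex.conj_re]
  linarith
end
end

section
/- (Null-vector condition for the Ricci flow reaction term.) Let R be an algebraic curvature tensor on ℝⁿ with nonnegative complex sectional curvature, and suppose Z, W ∈ ℂⁿ satisfy R(Z, W, Z̄, W̄) = 0. Then Q(R)(Z, W, Z̄, W̄) is a real number and Q(R)(Z, W, Z̄, W̄) ≥ 0. -/
open Complex

noncomputable section

/-! ### Auxiliary material for `null_vector_Q_nonneg` -/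

set_option maxRecDepth 4000

open scoped ComplexOrder
open Matrix
open scoped MatrixOrder

namespace NullVectorAux

/-- If a real quartic polynomial with zero constant term is nonnegative on `ℝ`,
its quadratic coefficient is nonnegative. -/
lemma quartic_aux (c₁ c₂ c₃ c₄ : ℝ)
    (h : ∀ s : ℝ, 0 ≤ c₁ * s + c₂ * s ^ 2 + c₃ * s ^ 3 + c₄ * s ^ 4) :
    0 ≤ c₂ := by
  have cont1 : Filter.Tendsto (fun s : ℝ => c₁ + c₂ * s + c₃ * s ^ 2 + c₄ * s ^ 3)
      (nhds 0) (nhds c₁) := by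
    have hc : Continuous fun s : ℝ => c₁ + c₂ * s + c₃ * s ^ 2 + c₄ * s ^ 3 := by continuity
    simpa using hc.tendsto 0
  have h1 : c₁ = 0 := by
    have hge : 0 ≤ c₁ := by
      have hev : ∀ᶠ s in nhdsWithin (0:ℝ) (Set.Ioi 0),
          0 ≤ c₁ + c₂ * s + c₃ * s ^ 2 + c₄ * s ^ 3 := by
        refine eventually_nhdsWithin_of_forall fun s hs => ?_
        have hs' : (0:ℝ) < s := hs
        have h2 : 0 ≤ s * (c₁ + c₂ * s + c₃ * s ^ 2 + c₄ * s ^ 3) := by nlinarith [h s]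
        by_contra hE
        exact absurd h2 (not_le.mpr (mul_neg_of_pos_of_neg hs' (not_le.mp hE)))
      exact ge_of_tendsto (cont1.mono_left nhdsWithin_le_nhds) hev
    have hle : c₁ ≤ 0 := by
      have hev : ∀ᶠ s in nhdsWithin (0:ℝ) (Set.Iio 0),
          c₁ + c₂ * s + c₃ * s ^ 2 + c₄ * s ^ 3 ≤ 0 := by
        refine eventually_nhdsWithin_of_forall fun s hs => ?_
        have hs' : s < (0:ℝ) := hs
        have h2 : 0 ≤ s * (c₁ + c₂ * s + c₃ * s ^ 2 + c₄ * s ^ 3) := by nlinarith [h s]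
        by_contra hE
        exact absurd h2 (not_le.mpr (mul_neg_of_neg_of_pos hs' (not_le.mp hE)))
      exact le_of_tendsto (cont1.mono_left nhdsWithin_le_nhds) hev
    linarith
  have cont2 : Filter.Tendsto (fun s : ℝ => c₂ + c₃ * s + c₄ * s ^ 2)
      (nhds 0) (nhds c₂) := by
    have hc : Continuous fun s : ℝ => c₂ + c₃ * s + c₄ * s ^ 2 := by continuity
    simpa using hc.tendsto 0
  have hev : ∀ᶠ s in nhdsWithin (0:ℝ) (Set.Ioi 0),
      0 ≤ c₂ + c₃ * s + c₄ * s ^ 2 := by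
    refine eventually_nhdsWithin_of_forall fun s hs => ?_
    have hs' : (0:ℝ) < s := hs
    have h2 : 0 ≤ s ^ 2 * (c₂ + c₃ * s + c₄ * s ^ 2) := by nlinarith [h s, h1]
    by_contra hE
    exact absurd h2 (not_le.mpr (mul_neg_of_pos_of_neg (by positivity) (not_le.mp hE)))
  exact ge_of_tendsto (cont2.mono_left nhdsWithin_le_nhds) hev

section Sums

variable {α β γ δ : Type*} [Fintype α] [Fintype β] [Fintype γ] [Fintype δ]
variable {M : Type*} [AddCommMonoid M]

lemma reorder13 (f : α → β → γ → δ → M) :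
    ∑ i, ∑ j, ∑ k, ∑ l, f i j k l = ∑ i, ∑ k, ∑ j, ∑ l, f i j k l :=
  Finset.sum_congr rfl fun _ _ => Finset.sum_comm

lemma reorder14 (f : α → β → γ → δ → M) :
    ∑ i, ∑ j, ∑ k, ∑ l, f i j k l = ∑ i, ∑ l, ∑ j, ∑ k, f i j k l :=
  Finset.sum_congr rfl fun _ _ =>
    (Finset.sum_congr rfl fun _ _ => Finset.sum_comm).trans Finset.sum_comm

lemma reorder23 (f : α → β → γ → δ → M) :
    ∑ i, ∑ j, ∑ k, ∑ l, f i j k l = ∑ j, ∑ k, ∑ i, ∑ l, f i j k l :=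
  Finset.sum_comm.trans (Finset.sum_congr rfl fun _ _ => Finset.sum_comm)

lemma reorder24 (f : α → β → γ → δ → M) :
    ∑ i, ∑ j, ∑ k, ∑ l, f i j k l = ∑ j, ∑ l, ∑ i, ∑ k, f i j k l :=
  Finset.sum_comm.trans (Finset.sum_congr rfl fun _ _ =>
    (Finset.sum_congr rfl fun _ _ => Finset.sum_comm).trans Finset.sum_comm)

lemma reorder_pair (f : α → β → γ → δ → M) :
    ∑ i, ∑ j, ∑ k, ∑ l, f i j k l = ∑ k, ∑ l, ∑ i, ∑ j, f i j k l :=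
  (Finset.sum_congr rfl fun _ _ => Finset.sum_comm).trans <|
    Finset.sum_comm.trans <| Finset.sum_congr rfl fun _ _ =>
      (Finset.sum_congr rfl fun _ _ => Finset.sum_comm).trans Finset.sum_comm

lemma sum_factor (f f' : β → α → ℂ) (g g' : α → β → ℂ) :
    ∑ p : β, ∑ q : β, (∑ m : α, f q m * g m p) * (∑ m' : α, f' q m' * g' m' p)
      = ∑ m : α, ∑ m' : α, (∑ q : β, f q m * f' q m') * (∑ p : β, g m p * g' m' p) := by
  simp only [Finset.sum_mul_sum]
  rw [reorder_pair]
  refine Finset.sum_congr rfl fun m _ => Finset.sum_congr rfl fun m' _ => ?_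
  rw [Finset.sum_comm]
  exact Finset.sum_congr rfl fun q _ => Finset.sum_congr rfl fun p _ => by ring

lemma sumswap {n : ℕ} (c d : Fin n → ℂ) (Mt : Fin n → Fin n → ℂ) :
    (∑ a : Fin n, ∑ b : Fin n, c a * (Mt b a * d b))
      = ∑ p : Fin n, ∑ q : Fin n, (d p * c q) * Mt p q := by
  rw [Finset.sum_comm]
  exact Finset.sum_congr rfl fun p _ => Finset.sum_congr rfl fun q _ => by ring

end Sums

variable {n : ℕ}

/-! #### Multilinearity of `evalC` -/

lemma evalC_smul₁ (T : AlgCurv n) (c : ℂ) (X Y U V : Fin n → ℂ) :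
    T.evalC (c • X) Y U V = c * T.evalC X Y U V := by
  simp only [AlgCurv.evalC, Finset.mul_sum]
  exact Finset.sum_congr rfl fun i _ => Finset.sum_congr rfl fun j _ =>
    Finset.sum_congr rfl fun k _ => Finset.sum_congr rfl fun l _ => by
      simp only [Pi.smul_apply, smul_eq_mul]; ring

lemma evalC_smul₂ (T : AlgCurv n) (c : ℂ) (X Y U V : Fin n → ℂ) :
    T.evalC X (c • Y) U V = c * T.evalC X Y U V := by
  simp only [AlgCurv.evalC, Finset.mul_sum]
  exact Finset.sum_congr rfl fun i _ => Finset.sum_congr rfl fun j _ =>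
    Finset.sum_congr rfl fun k _ => Finset.sum_congr rfl fun l _ => by
      simp only [Pi.smul_apply, smul_eq_mul]; ring

lemma evalC_smul₃ (T : AlgCurv n) (c : ℂ) (X Y U V : Fin n → ℂ) :
    T.evalC X Y (c • U) V = c * T.evalC X Y U V := by
  simp only [AlgCurv.evalC, Finset.mul_sum]
  exact Finset.sum_congr rfl fun i _ => Finset.sum_congr rfl fun j _ =>
    Finset.sum_congr rfl fun k _ => Finset.sum_congr rfl fun l _ => by
      simp only [Pi.smul_apply, smul_eq_mul]; ring

lemma evalC_smul₄ (T : AlgCurv n) (c : ℂ) (X Y U V : Fin n → ℂ) :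
    T.evalC X Y U (c • V) = c * T.evalC X Y U V := by
  simp only [AlgCurv.evalC, Finset.mul_sum]
  exact Finset.sum_congr rfl fun i _ => Finset.sum_congr rfl fun j _ =>
    Finset.sum_congr rfl fun k _ => Finset.sum_congr rfl fun l _ => by
      simp only [Pi.smul_apply, smul_eq_mul]; ring

lemma evalC_expand (T : AlgCurv n) (X X' Y Y' U U' V V' : Fin n → ℂ) (s : ℂ) :
    T.evalC (X + s • X') (Y + s • Y') (U + s • U') (V + s • V') =
      T.evalC X Y U V
      + s * (T.evalC X' Y U V + T.evalC X Y' U V + T.evalC X Y U' V + T.evalC X Y U V')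
      + s ^ 2 * (T.evalC X' Y' U V + T.evalC X' Y U' V + T.evalC X' Y U V'
          + T.evalC X Y' U' V + T.evalC X Y' U V' + T.evalC X Y U' V')
      + s ^ 3 * (T.evalC X' Y' U' V + T.evalC X' Y' U V' + T.evalC X' Y U' V'
          + T.evalC X Y' U' V')
      + s ^ 4 * T.evalC X' Y' U' V' := by
  simp only [AlgCurv.evalC, Finset.mul_sum, ← Finset.sum_add_distrib]
  refine Finset.sum_congr rfl fun i _ => Finset.sum_congr rfl fun j _ =>
    Finset.sum_congr rfl fun k _ => Finset.sum_congr rfl fun l _ => ?_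
  simp only [Pi.add_apply, Pi.smul_apply, smul_eq_mul]
  ring

lemma evalC_conj (T : AlgCurv n) (A B C D : Fin n → ℂ) :
    starRingEnd ℂ (T.evalC A B C D)
      = T.evalC (conjV A) (conjV B) (conjV C) (conjV D) := by
  simp only [AlgCurv.evalC, map_sum]
  refine Finset.sum_congr rfl fun i _ => Finset.sum_congr rfl fun j _ =>
    Finset.sum_congr rfl fun k _ => Finset.sum_congr rfl fun l _ => ?_
  simp [conjV, _root_.map_mul, Complex.conj_ofReal]

lemma evalC_pairswap (T : AlgCurv n) (A B C D : Fin n → ℂ) :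
    T.evalC A B C D = T.evalC C D A B := by
  simp only [AlgCurv.evalC]
  rw [reorder_pair]
  refine Finset.sum_congr rfl fun k _ => Finset.sum_congr rfl fun l _ =>
    Finset.sum_congr rfl fun i _ => Finset.sum_congr rfl fun j _ => ?_
  rw [show T.R i j k l = T.R k l i j from T.pair_symm i j k l]
  ring

/-! #### conjV lemmas -/

lemma conjV_conjV (A : Fin n → ℂ) : conjV (conjV A) = A := by
  funext i; simp [conjV]

lemma conjV_add_smul (A B : Fin n → ℂ) (s : ℝ) :
    conjV (A + (s : ℂ) • B) = conjV A + (s : ℂ) • conjV B := by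
  funext i
  simp [conjV, Complex.conj_ofReal]

lemma conjV_smul (c : ℂ) (A : Fin n → ℂ) :
    conjV (c • A) = (starRingEnd ℂ c) • conjV A := by
  funext i; simp [conjV]

/-! #### Coefficient matrices and the block matrix `Hm` -/

/-- `A`-block : `R(Z, e_p, Z̄, e_q)`. -/
def Acm (T : AlgCurv n) (Z : Fin n → ℂ) (p q : Fin n) : ℂ :=
  ∑ i, ∑ k, ((T.R i p k q : ℝ) : ℂ) * Z i * conjV Z k

/-- `B`-block : `R(e_p, W, e_q, W̄)`. -/
def Bcm (T : AlgCurv n) (W : Fin n → ℂ) (p q : Fin n) : ℂ :=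
  ∑ j, ∑ l, ((T.R p j q l : ℝ) : ℂ) * W j * conjV W l

/-- `E`-block : `R(e_p, W, Z̄, e_q)`. -/
def Ecm (T : AlgCurv n) (W Z : Fin n → ℂ) (p q : Fin n) : ℂ :=
  ∑ j, ∑ k, ((T.R p j k q : ℝ) : ℂ) * W j * conjV Z k

/-- `F`-block : `R(Z, e_p, e_q, W̄)`. -/
def Fcm (T : AlgCurv n) (Z W : Fin n → ℂ) (p q : Fin n) : ℂ :=
  ∑ i, ∑ l, ((T.R i p q l : ℝ) : ℂ) * Z i * conjV W l

/-- Coefficients `R(e_i, e_j, e_p, e_q)` contracted with `Z, W`. -/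
def Sm (T : AlgCurv n) (Z W : Fin n → ℂ) (p q : Fin n) : ℂ :=
  ∑ i, ∑ j, ((T.R i j p q : ℝ) : ℂ) * Z i * W j

/-- The Hermitian block matrix of the second variation. -/
def Hm (T : AlgCurv n) (Z W : Fin n → ℂ) :
    Matrix (Fin n ⊕ Fin n) (Fin n ⊕ Fin n) ℂ :=
  Matrix.of fun a b =>
    Sum.elim
      (fun a1 => Sum.elim (fun b1 => Bcm T W b1 a1) (fun b1 => Fcm T Z W b1 a1) b)
      (fun a2 => Sum.elim (fun b1 => Ecm T W Z b1 a2) (fun b1 => Acm T Z b1 a2) b) a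

@[simp] lemma Hm_inl_inl (T : AlgCurv n) (Z W : Fin n → ℂ) (a b : Fin n) :
    Hm T Z W (Sum.inl a) (Sum.inl b) = Bcm T W b a := rfl
@[simp] lemma Hm_inl_inr (T : AlgCurv n) (Z W : Fin n → ℂ) (a b : Fin n) :
    Hm T Z W (Sum.inl a) (Sum.inr b) = Fcm T Z W b a := rfl
@[simp] lemma Hm_inr_inl (T : AlgCurv n) (Z W : Fin n → ℂ) (a b : Fin n) :
    Hm T Z W (Sum.inr a) (Sum.inl b) = Ecm T W Z b a := rfl
@[simp] lemma Hm_inr_inr (T : AlgCurv n) (Z W : Fin n → ℂ) (a b : Fin n) :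
    Hm T Z W (Sum.inr a) (Sum.inr b) = Acm T Z b a := rfl

/-! #### Pattern expansions of `evalC` -/

lemma evalC_patB (T : AlgCurv n) (W X U : Fin n → ℂ) :
    T.evalC X W U (conjV W) = ∑ p, ∑ q, (X p * U q) * Bcm T W p q := by
  simp only [AlgCurv.evalC, Bcm]
  rw [reorder13]
  refine Finset.sum_congr rfl fun p _ => Finset.sum_congr rfl fun q _ => ?_
  rw [Finset.mul_sum]
  refine Finset.sum_congr rfl fun j _ => ?_
  rw [Finset.mul_sum]
  exact Finset.sum_congr rfl fun l _ => by ring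

lemma evalC_patE (T : AlgCurv n) (W Z X V' : Fin n → ℂ) :
    T.evalC X W (conjV Z) V' = ∑ p, ∑ q, (X p * V' q) * Ecm T W Z p q := by
  simp only [AlgCurv.evalC, Ecm]
  rw [reorder14]
  refine Finset.sum_congr rfl fun p _ => Finset.sum_congr rfl fun q _ => ?_
  rw [Finset.mul_sum]
  refine Finset.sum_congr rfl fun j _ => ?_
  rw [Finset.mul_sum]
  exact Finset.sum_congr rfl fun k _ => by ring

lemma evalC_patF (T : AlgCurv n) (Z W Y' U : Fin n → ℂ) :
    T.evalC Z Y' U (conjV W) = ∑ p, ∑ q, (Y' p * U q) * Fcm T Z W p q := by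
  simp only [AlgCurv.evalC, Fcm]
  rw [reorder23]
  refine Finset.sum_congr rfl fun p _ => Finset.sum_congr rfl fun q _ => ?_
  rw [Finset.mul_sum]
  refine Finset.sum_congr rfl fun i _ => ?_
  rw [Finset.mul_sum]
  exact Finset.sum_congr rfl fun l _ => by ring

lemma evalC_patA (T : AlgCurv n) (Z Y' V' : Fin n → ℂ) :
    T.evalC Z Y' (conjV Z) V' = ∑ p, ∑ q, (Y' p * V' q) * Acm T Z p q := by
  simp only [AlgCurv.evalC, Acm]
  rw [reorder24]
  refine Finset.sum_congr rfl fun p _ => Finset.sum_congr rfl fun q _ => ?_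
  rw [Finset.mul_sum]
  refine Finset.sum_congr rfl fun i _ => ?_
  rw [Finset.mul_sum]
  exact Finset.sum_congr rfl fun k _ => by ring

/-! #### Basis collapse -/

lemma evalC_basis34 (T : AlgCurv n) (X Y : Fin n → ℂ) (p q : Fin n) :
    T.evalC X Y (basisC p) (basisC q)
      = ∑ i, ∑ j, ((T.R i j p q : ℝ) : ℂ) * X i * Y j := by
  simp [AlgCurv.evalC, basisC, mul_ite, ite_mul, mul_one, mul_zero, zero_mul,
    Finset.sum_ite_eq', Finset.mem_univ]

lemma evalC_basis24 (T : AlgCurv n) (X U : Fin n → ℂ) (p q : Fin n) :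
    T.evalC X (basisC p) U (basisC q)
      = ∑ i, ∑ k, ((T.R i p k q : ℝ) : ℂ) * X i * U k := by
  simp [AlgCurv.evalC, basisC, mul_ite, ite_mul, mul_one, mul_zero, zero_mul,
    Finset.sum_ite_eq', Finset.mem_univ]

/-! #### Hermitian symmetry of `Hm` -/

lemma Bcm_conj (T : AlgCurv n) (W : Fin n → ℂ) (p q : Fin n) :
    starRingEnd ℂ (Bcm T W p q) = Bcm T W q p := by
  simp only [Bcm, map_sum]
  rw [Finset.sum_comm]
  refine Finset.sum_congr rfl fun j _ => Finset.sum_congr rfl fun l _ => ?_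
  simp only [_root_.map_mul, Complex.conj_ofReal, conjV, Complex.conj_conj]
  rw [show T.R p l q j = T.R q j p l from T.pair_symm p l q j]
  ring

lemma Acm_conj (T : AlgCurv n) (Z : Fin n → ℂ) (p q : Fin n) :
    starRingEnd ℂ (Acm T Z p q) = Acm T Z q p := by
  simp only [Acm, map_sum]
  rw [Finset.sum_comm]
  refine Finset.sum_congr rfl fun i _ => Finset.sum_congr rfl fun k _ => ?_
  simp only [_root_.map_mul, Complex.conj_ofReal, conjV, Complex.conj_conj]
  rw [show T.R k p i q = T.R i q k p from T.pair_symm k p i q]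
  ring

lemma Ecm_conj (T : AlgCurv n) (W Z : Fin n → ℂ) (p q : Fin n) :
    starRingEnd ℂ (Ecm T W Z p q) = Fcm T Z W q p := by
  simp only [Ecm, Fcm, map_sum]
  rw [Finset.sum_comm]
  refine Finset.sum_congr rfl fun i _ => Finset.sum_congr rfl fun l _ => ?_
  simp only [_root_.map_mul, Complex.conj_ofReal, conjV, Complex.conj_conj]
  rw [show T.R p l i q = T.R i q p l from T.pair_symm p l i q]
  ring

lemma Hm_isHermitian (T : AlgCurv n) (Z W : Fin n → ℂ) :
    (Hm T Z W).IsHermitian := by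
  rw [Matrix.IsHermitian]
  ext a b
  rw [Matrix.conjTranspose_apply]
  cases a with
  | inl a =>
    cases b with
    | inl b =>
      rw [Hm_inl_inl, Hm_inl_inl, ← starRingEnd_apply]
      exact Bcm_conj T W a b
    | inr b =>
      rw [Hm_inr_inl, Hm_inl_inr, ← starRingEnd_apply]
      exact Ecm_conj T W Z a b
  | inr a =>
    cases b with
    | inl b =>
      rw [Hm_inl_inr, Hm_inr_inl, ← starRingEnd_apply]
      have := congrArg (starRingEnd ℂ) (Ecm_conj T W Z b a)
      rw [Complex.conj_conj] at this
      exact this.symm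
    | inr b =>
      rw [Hm_inr_inr, Hm_inr_inr, ← starRingEnd_apply]
      exact Acm_conj T Z a b

/-! #### The quadratic form of `Hm` -/

lemma dot_eq (T : AlgCurv n) (Z W ξ η : Fin n → ℂ) :
    star (Sum.elim ξ η) ⬝ᵥ (Hm T Z W) *ᵥ (Sum.elim ξ η)
      = T.evalC ξ W (conjV ξ) (conjV W) + T.evalC ξ W (conjV Z) (conjV η)
        + T.evalC Z η (conjV ξ) (conjV W) + T.evalC Z η (conjV Z) (conjV η) := by
  rw [evalC_patB T W ξ (conjV ξ), evalC_patE T W Z ξ (conjV η),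
    evalC_patF T Z W η (conjV ξ), evalC_patA T Z η (conjV η)]
  rw [← sumswap (conjV ξ) ξ (Bcm T W), ← sumswap (conjV η) ξ (Ecm T W Z),
    ← sumswap (conjV ξ) η (Fcm T Z W), ← sumswap (conjV η) η (Acm T Z)]
  simp only [dotProduct, Matrix.mulVec, Fintype.sum_sum_type, Pi.star_apply,
    Sum.elim_inl, Sum.elim_inr, Hm_inl_inl, Hm_inl_inr, Hm_inr_inl, Hm_inr_inr,
    Finset.mul_sum, mul_add, Finset.sum_add_distrib, Complex.star_def, conjV]
  ring

/-! #### Second variation -/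

lemma secondvar (T : AlgCurv n) (hT : nonnegCSC T) (Z W : Fin n → ℂ)
    (h0 : T.evalC Z W (conjV Z) (conjV W) = 0) (ξ η : Fin n → ℂ) :
    0 ≤ (T.evalC ξ η (conjV Z) (conjV W) + T.evalC ξ W (conjV ξ) (conjV W)
        + T.evalC ξ W (conjV Z) (conjV η) + T.evalC Z η (conjV ξ) (conjV W)
        + T.evalC Z η (conjV Z) (conjV η) + T.evalC Z W (conjV ξ) (conjV η)).re := by
  refine quartic_aux
    (T.evalC ξ W (conjV Z) (conjV W) + T.evalC Z η (conjV Z) (conjV W)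
      + T.evalC Z W (conjV ξ) (conjV W) + T.evalC Z W (conjV Z) (conjV η)).re
    _
    (T.evalC ξ η (conjV ξ) (conjV W) + T.evalC ξ η (conjV Z) (conjV η)
      + T.evalC ξ W (conjV ξ) (conjV η) + T.evalC Z η (conjV ξ) (conjV η)).re
    (T.evalC ξ η (conjV ξ) (conjV η)).re
    (fun s => ?_)
  obtain ⟨r, hr0, hr⟩ := hT (Z + (s : ℂ) • ξ) (W + (s : ℂ) • η)
  rw [conjV_add_smul Z ξ s, conjV_add_smul W η s, evalC_expand, h0] at hr
  have h2 := congrArg Complex.re hr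
  simp only [Complex.add_re, Complex.zero_re, ← Complex.ofReal_pow,
    Complex.re_ofReal_mul, Complex.ofReal_re] at h2
  simp only [Complex.add_re]
  nlinarith [h2, hr0]

lemma second_b (T : AlgCurv n) (hT : nonnegCSC T) (Z W : Fin n → ℂ)
    (h0 : T.evalC Z W (conjV Z) (conjV W) = 0) (ξ η : Fin n → ℂ) :
    0 ≤ (T.evalC ξ W (conjV ξ) (conjV W) + T.evalC ξ W (conjV Z) (conjV η)
        + T.evalC Z η (conjV ξ) (conjV W) + T.evalC Z η (conjV Z) (conjV η)).re := by
  have h1 := secondvar T hT Z W h0 ξ η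
  have h2 := secondvar T hT Z W h0 (Complex.I • ξ) (Complex.I • η)
  rw [conjV_smul Complex.I ξ, conjV_smul Complex.I η, Complex.conj_I] at h2
  simp only [evalC_smul₁, evalC_smul₂, evalC_smul₃, evalC_smul₄] at h2
  have e1 : ∀ z : ℂ, Complex.I * (Complex.I * z) = -z := fun z => by
    rw [← mul_assoc, Complex.I_mul_I, neg_one_mul]
  have e2 : ∀ z : ℂ, Complex.I * (-Complex.I * z) = z := fun z => by
    rw [← mul_assoc, mul_neg, Complex.I_mul_I, neg_neg, one_mul]
  have e3 : ∀ z : ℂ, -Complex.I * (Complex.I * z) = z := fun z => by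
    rw [← mul_assoc, neg_mul, Complex.I_mul_I, neg_neg, one_mul]
  have e4 : ∀ z : ℂ, -Complex.I * (-Complex.I * z) = -z := fun z => by
    rw [← mul_assoc, neg_mul_neg, Complex.I_mul_I, neg_one_mul]
  simp only [e1, e2, e3, e4] at h2
  simp only [Complex.add_re, Complex.neg_re] at h1 h2 ⊢
  linarith

lemma b_conj (T : AlgCurv n) (Z W ξ η : Fin n → ℂ) :
    starRingEnd ℂ (T.evalC ξ W (conjV ξ) (conjV W) + T.evalC ξ W (conjV Z) (conjV η)
        + T.evalC Z η (conjV ξ) (conjV W) + T.evalC Z η (conjV Z) (conjV η))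
      = T.evalC ξ W (conjV ξ) (conjV W) + T.evalC ξ W (conjV Z) (conjV η)
        + T.evalC Z η (conjV ξ) (conjV W) + T.evalC Z η (conjV Z) (conjV η) := by
  simp only [map_add, evalC_conj, conjV_conjV]
  rw [evalC_pairswap T (conjV ξ) (conjV W) ξ W, evalC_pairswap T (conjV ξ) (conjV W) Z η,
    evalC_pairswap T (conjV Z) (conjV η) ξ W, evalC_pairswap T (conjV Z) (conjV η) Z η]
  ring

/-! #### Identification of the `Qr` sums -/

lemma Qr_eq (T : AlgCurv n) (Z W : Fin n → ℂ) :
    Qr T Z W (conjV Z) (conjV W)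
      = (∑ p, ∑ q, Sm T Z W p q * starRingEnd ℂ (Sm T Z W p q))
        + 2 * (∑ p, ∑ q, Acm T Z p q * Bcm T W p q)
        - 2 * (∑ p, ∑ q, Fcm T Z W p q * Ecm T W Z p q) := by
  have h1 : ∀ p q : Fin n, T.evalC Z W (basisC p) (basisC q) = Sm T Z W p q := fun p q => by
    rw [evalC_basis34, Sm]
  have h2 : ∀ p q : Fin n, T.evalC (conjV Z) (conjV W) (basisC p) (basisC q)
      = starRingEnd ℂ (Sm T Z W p q) := fun p q => by
    rw [evalC_basis34, Sm, map_sum]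
    refine Finset.sum_congr rfl fun i _ => ?_
    rw [map_sum]
    refine Finset.sum_congr rfl fun j _ => ?_
    simp [conjV, Complex.conj_ofReal]
  have h3 : ∀ p q : Fin n, T.evalC Z (basisC p) (conjV Z) (basisC q) = Acm T Z p q :=
    fun p q => by rw [evalC_basis24, Acm]
  have h4 : ∀ p q : Fin n, T.evalC W (basisC p) (conjV W) (basisC q) = Bcm T W p q :=
    fun p q => by
      rw [evalC_basis24, Bcm]
      refine Finset.sum_congr rfl fun j _ => Finset.sum_congr rfl fun l _ => ?_
      rw [show T.R j p l q = T.R p j q l from by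
        rw [T.skew₁ j p l q, T.skew₂ p j l q]; ring]
  have h5 : ∀ p q : Fin n, T.evalC Z (basisC p) (conjV W) (basisC q) = -Fcm T Z W p q :=
    fun p q => by
      rw [evalC_basis24, Fcm, ← Finset.sum_neg_distrib]
      refine Finset.sum_congr rfl fun i _ => ?_
      rw [← Finset.sum_neg_distrib]
      refine Finset.sum_congr rfl fun k _ => ?_
      rw [show T.R i p k q = -T.R i p q k from T.skew₂ i p k q]
      push_cast
      ring
  have h6 : ∀ p q : Fin n, T.evalC W (basisC p) (conjV Z) (basisC q) = -Ecm T W Z p q :=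
    fun p q => by
      rw [evalC_basis24, Ecm, ← Finset.sum_neg_distrib]
      refine Finset.sum_congr rfl fun j _ => ?_
      rw [← Finset.sum_neg_distrib]
      refine Finset.sum_congr rfl fun k _ => ?_
      rw [show T.R j p k q = -T.R p j k q from T.skew₁ j p k q]
      push_cast
      ring
  simp only [Qr, h1, h2, h3, h4, h5, h6, neg_mul_neg]

end NullVectorAux
open NullVectorAux in
/-- null-vector condition for the Ricci flow reaction term `Q(R)`. -/
theorem null_vector_Q_nonneg {n : ℕ} (T : AlgCurv n) (hT : nonnegCSC T)
    (Z W : Fin n → ℂ) (h0 : T.evalC Z W (conjV Z) (conjV W) = 0) :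
    ∃ r : ℝ, 0 ≤ r ∧ Qr T Z W (conjV Z) (conjV W) = (r : ℂ) := by
  classical
  -- the second-variation matrix is positive semidefinite
  have hpsd : (Hm T Z W).PosSemidef := by
    refine Matrix.PosSemidef.of_dotProduct_mulVec_nonneg (Hm_isHermitian T Z W) fun v => ?_
    have hv : v = Sum.elim (fun p => v (Sum.inl p)) (fun p => v (Sum.inr p)) := by
      funext a; cases a <;> rfl
    rw [hv, dot_eq T Z W]
    refine Complex.le_def.mpr ⟨?_, ?_⟩
    · simpa using second_b T hT Z W h0 _ _
    · rw [Complex.zero_im]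
      exact (Complex.conj_eq_iff_im.mp (b_conj T Z W _ _)).symm
  -- square root of `Hm`
  set Q : Matrix (Fin n ⊕ Fin n) (Fin n ⊕ Fin n) ℂ := CFC.sqrt (Hm T Z W) with hQdef
  have hQQ : Q * Q = Hm T Z W := CFC.sqrt_mul_sqrt_self _ hpsd.nonneg
  have hQh : Q.IsHermitian := (CFC.sqrt_nonneg (Hm T Z W)).posSemidef.1
  have hent : ∀ a b, Hm T Z W a b = ∑ m, Q a m * Q m b := fun a b => by
    rw [← hQQ, Matrix.mul_apply]
  set x : (Fin n ⊕ Fin n) → (Fin n ⊕ Fin n) → ℂ :=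
    fun m m' => ∑ q, Q (Sum.inr q) m * Q (Sum.inl q) m' with hxdef
  have hx2 : ∀ m m', starRingEnd ℂ (x m m')
      = ∑ p, Q m (Sum.inr p) * Q m' (Sum.inl p) := fun m m' => by
    simp only [hxdef]
    rw [map_sum]
    refine Finset.sum_congr rfl fun p _ => ?_
    rw [_root_.map_mul, starRingEnd_apply, starRingEnd_apply, hQh.apply, hQh.apply]
  have hA : ∀ p q, Acm T Z p q = ∑ m, Q (Sum.inr q) m * Q m (Sum.inr p) := fun p q =>
    hent (Sum.inr q) (Sum.inr p)
  have hB : ∀ p q, Bcm T W p q = ∑ m, Q (Sum.inl q) m * Q m (Sum.inl p) := fun p q =>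
    hent (Sum.inl q) (Sum.inl p)
  have hE : ∀ p q, Ecm T W Z p q = ∑ m, Q (Sum.inr q) m * Q m (Sum.inl p) := fun p q =>
    hent (Sum.inr q) (Sum.inl p)
  have hF : ∀ p q, Fcm T Z W p q = ∑ m, Q (Sum.inl q) m * Q m (Sum.inr p) := fun p q =>
    hent (Sum.inl q) (Sum.inr p)
  have hP : (∑ p, ∑ q, Acm T Z p q * Bcm T W p q)
      = ∑ m, ∑ m', x m m' * starRingEnd ℂ (x m m') := by
    simp only [hA, hB]
    rw [sum_factor]
    refine Finset.sum_congr rfl fun m _ => Finset.sum_congr rfl fun m' _ => ?_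
    rw [← hx2 m m']
  have hG : (∑ p, ∑ q, Fcm T Z W p q * Ecm T W Z p q)
      = ∑ m, ∑ m', x m' m * starRingEnd ℂ (x m m') := by
    simp only [hF, hE]
    rw [sum_factor]
    refine Finset.sum_congr rfl fun m _ => Finset.sum_congr rfl fun m' _ => ?_
    rw [← hx2 m m']
    congr 1
    simp only [hxdef]
    exact Finset.sum_congr rfl fun q _ => mul_comm _ _
  -- real quantities
  set t1 : ℝ := ∑ p, ∑ q, Complex.normSq (Sm T Z W p q) with ht1
  have hT1 : (∑ p, ∑ q, Sm T Z W p q * starRingEnd ℂ (Sm T Z W p q)) = (t1 : ℂ) := by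
    rw [ht1]
    push_cast
    exact Finset.sum_congr rfl fun p _ => Finset.sum_congr rfl fun q _ =>
      (Complex.mul_conj _)
  set xs : ℝ := ∑ m, ∑ m', Complex.normSq (x m m') with hxs
  have hXS : (∑ m, ∑ m', x m m' * starRingEnd ℂ (x m m')) = (xs : ℂ) := by
    rw [hxs]
    push_cast
    exact Finset.sum_congr rfl fun m _ => Finset.sum_congr rfl fun m' _ =>
      (Complex.mul_conj _)
  set g : ℂ := ∑ m, ∑ m', x m' m * starRingEnd ℂ (x m m') with hg
  have hgconj : starRingEnd ℂ g = g := by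
    rw [hg]
    simp only [map_sum, _root_.map_mul, Complex.conj_conj]
    rw [Finset.sum_comm]
    exact Finset.sum_congr rfl fun m _ => Finset.sum_congr rfl fun m' _ => by ring
  have hgre : ((g.re : ℝ) : ℂ) = g := Complex.conj_eq_iff_re.mp hgconj
  have hbound : g.re ≤ xs := by
    have hsplit : g.re = ∑ m, ∑ m', (x m' m * starRingEnd ℂ (x m m')).re := by
      rw [hg]
      simp [Complex.re_sum]
    have hpt : ∀ m m' : Fin n ⊕ Fin n, 2 * (x m' m * starRingEnd ℂ (x m m')).re
        ≤ Complex.normSq (x m m') + Complex.normSq (x m' m) := by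
      intro m m'
      simp only [Complex.mul_re, Complex.conj_re, Complex.conj_im, Complex.normSq_apply]
      nlinarith [sq_nonneg ((x m' m).re - (x m m').re), sq_nonneg ((x m' m).im - (x m m').im)]
    have h3 : ∑ m, ∑ m', Complex.normSq (x m' m) = ∑ m, ∑ m', Complex.normSq (x m m') :=
      Finset.sum_comm
    have hsum : ∑ m, ∑ m', (2 * (x m' m * starRingEnd ℂ (x m m')).re)
        ≤ ∑ m, ∑ m', (Complex.normSq (x m m') + Complex.normSq (x m' m)) :=
      Finset.sum_le_sum fun m _ => Finset.sum_le_sum fun m' _ => hpt m m'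
    simp only [Finset.sum_add_distrib, ← Finset.mul_sum] at hsum
    rw [h3] at hsum
    rw [hsplit, hxs]
    linarith
  refine ⟨t1 + 2 * xs - 2 * g.re, ?_, ?_⟩
  · have ht1n : 0 ≤ t1 := by
      rw [ht1]
      exact Finset.sum_nonneg fun p _ => Finset.sum_nonneg fun q _ =>
        Complex.normSq_nonneg _
    have hxsn : 0 ≤ xs := by
      rw [hxs]
      exact Finset.sum_nonneg fun m _ => Finset.sum_nonneg fun m' _ =>
        Complex.normSq_nonneg _
    linarith
  · rw [Qr_eq T Z W, hT1, hP, hXS, hG]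
    conv_lhs => rw [← hgre]
    push_cast
    ring
end
end

section
/- Let A be a symmetric positive semidefinite linear endomorphism of ℝⁿ, extended ℂ-linearly to ℂⁿ. Then for all Z, W ∈ ℂⁿ, the quantity (A∧id)(Z,W,Z̄,W̄) := (1/2)·(⟨A(Z), Z̄⟩·|W|² + ⟨A(W), W̄⟩·|Z|²) − (1/2)·(⟨A(W), Z̄⟩·⟨Z, W̄⟩ + ⟨A(Z), W̄⟩·⟨W, Z̄⟩) is a real number and is ≥ 0. -/
open Complex

noncomputable section

open scoped MatrixOrder

section AuxWedge

variable {n : ℕ}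

private def toEuc (Z : Fin n → ℂ) : EuclideanSpace ℂ (Fin n) := (WithLp.equiv 2 _).symm Z

private lemma cInner_eq_inner' (Z W : Fin n → ℂ) :
    cInner Z (conjV W) = inner (𝕜 := ℂ) (toEuc W) (toEuc Z) := by
  simp [cInner, conjV, toEuc, PiLp.inner_apply, RCLike.inner_apply,
    WithLp.equiv_symm_apply, mul_comm]

private lemma mulVecC_mul' (M N : Matrix (Fin n) (Fin n) ℝ) (Z : Fin n → ℂ) :
    mulVecC (M * N) Z = mulVecC M (mulVecC N Z) := by
  funext i
  simp only [mulVecC, Matrix.mul_apply, Finset.mul_sum, Finset.sum_mul]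
  push_cast
  rw [Finset.sum_comm]
  simp [Finset.sum_mul, mul_assoc]

private lemma conjV_mulVecC' (B : Matrix (Fin n) (Fin n) ℝ) (Z : Fin n → ℂ) :
    conjV (mulVecC B Z) = mulVecC B (conjV Z) := by
  funext i
  simp [conjV, mulVecC, map_sum, Complex.conj_ofReal]

private lemma cInner_mulVecC_symm' (B : Matrix (Fin n) (Fin n) ℝ) (hB : ∀ i j, B i j = B j i)
    (Z W : Fin n → ℂ) :
    cInner (mulVecC B Z) W = cInner Z (mulVecC B W) := by
  simp only [cInner, mulVecC, Finset.sum_mul, Finset.mul_sum]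
  rw [Finset.sum_comm]
  refine Finset.sum_congr rfl fun j _ => Finset.sum_congr rfl fun i _ => ?_
  rw [hB i j]
  ring

private lemma inner_self_c (x : EuclideanSpace ℂ (Fin n)) :
    inner (𝕜 := ℂ) x x = (Complex.ofReal (‖x‖))^2 := inner_self_eq_norm_sq_to_K x

end AuxWedge

/-- for a symmetric positive semidefinite endomorphism `A` of `ℝⁿ`,
`(A ∧ id)(Z, W, Z̄, W̄)` is a nonnegative real number. -/
theorem wedgeId_nonneg {n : ℕ} (A : Matrix (Fin n) (Fin n) ℝ)
    (hsymm : ∀ X Y : Fin n → ℝ, rInner (A.mulVec X) Y = rInner X (A.mulVec Y))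
    (hpsd : ∀ X : Fin n → ℝ, 0 ≤ rInner (A.mulVec X) X)
    (Z W : Fin n → ℂ) :
    ∃ r : ℝ, 0 ≤ r ∧ wedgeId A Z W = (r : ℂ) := by
  have hsym' : ∀ i j, A i j = A j i := by
    intro i j
    have h := hsymm (Pi.single j 1) (Pi.single i 1)
    simpa [rInner, Matrix.mulVec, dotProduct, Pi.single_apply, mul_ite, ite_mul,
      Finset.sum_ite_eq, Finset.sum_ite_eq'] using h
  have hA : A.PosSemidef := by
    refine Matrix.PosSemidef.of_dotProduct_mulVec_nonneg ?_ ?_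
    · ext i j
      simp [Matrix.conjTranspose_apply, hsym' i j]
    · intro x
      simpa [dotProduct, rInner, mul_comm] using hpsd x
  set B := CFC.sqrt A with hBdef
  have hBB : B * B = A := CFC.sqrt_mul_sqrt_self A (Matrix.nonneg_iff_posSemidef.mpr hA)
  have hBH := (Matrix.nonneg_iff_posSemidef.mp (CFC.sqrt_nonneg A)).1
  have hBsym : ∀ i j, B i j = B j i := by
    intro i j
    have h := congrFun (congrFun hBH i) j
    simpa [Matrix.conjTranspose_apply] using h.symm
  set bz := mulVecC B Z with hbz
  set bw := mulVecC B W with hbw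
  have hAZ : mulVecC A Z = mulVecC B bz := by rw [← hBB, mulVecC_mul']
  have hAW : mulVecC A W = mulVecC B bw := by rw [← hBB, mulVecC_mul']
  have h1 : cInner (mulVecC A Z) (conjV Z) = cInner bz (conjV bz) := by
    rw [hAZ, cInner_mulVecC_symm' B hBsym, ← conjV_mulVecC']
  have h2 : cInner (mulVecC A W) (conjV W) = cInner bw (conjV bw) := by
    rw [hAW, cInner_mulVecC_symm' B hBsym, ← conjV_mulVecC']
  have h3 : cInner (mulVecC A W) (conjV Z) = cInner bw (conjV bz) := by
    rw [hAW, cInner_mulVecC_symm' B hBsym, ← conjV_mulVecC']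
  have h4 : cInner (mulVecC A Z) (conjV W) = cInner bz (conjV bw) := by
    rw [hAZ, cInner_mulVecC_symm' B hBsym, ← conjV_mulVecC']
  set α : ℂ := inner ℂ (toEuc bz) (toEuc bw) with hα
  set β : ℂ := inner ℂ (toEuc W) (toEuc Z) with hβ
  refine ⟨(1/2)*(‖toEuc bz‖^2*‖toEuc W‖^2 + ‖toEuc bw‖^2*‖toEuc Z‖^2) - (α*β).re, ?_, ?_⟩
  · have hCSα : ‖α‖ ≤ ‖toEuc bz‖ * ‖toEuc bw‖ := norm_inner_le_norm _ _
    have hCSβ : ‖β‖ ≤ ‖toEuc W‖ * ‖toEuc Z‖ := norm_inner_le_norm _ _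
    have h5 : (α*β).re ≤ ‖α‖ * ‖β‖ := by
      calc (α*β).re ≤ ‖α*β‖ := Complex.re_le_norm _
        _ = ‖α‖ * ‖β‖ := by rw [norm_mul]
    have h6 : ‖α‖ * ‖β‖ ≤ (‖toEuc bz‖ * ‖toEuc bw‖) * (‖toEuc W‖ * ‖toEuc Z‖) :=
      mul_le_mul hCSα hCSβ (norm_nonneg _) (by positivity)
    nlinarith [sq_nonneg (‖toEuc bz‖*‖toEuc W‖ - ‖toEuc bw‖*‖toEuc Z‖)]
  · rw [wedgeId, h1, h2, h3, h4]
    simp only [cInner_eq_inner', inner_self_c, ← hα, ← hβ,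
      ← inner_conj_symm (toEuc bw) (toEuc bz), ← inner_conj_symm (toEuc Z) (toEuc W)]
    rw [← map_mul]
    have h7 : α * β + (starRingEnd ℂ) (α * β) = 2 * ((α*β).re : ℂ) := by rw [Complex.add_conj]; push_cast; ring
    push_cast
    linear_combination (-1/2) * h7
end
end

section
/- Let R be an algebraic curvature tensor on ℝⁿ, let f ≥ 0 be a real number, and assume Ric(R)(X,X) ≥ (n−1)·f·|X|² for all X ∈ ℝⁿ. Then for all Z, W ∈ ℂⁿ, 2f·(Ric(R)∧id)(Z,W,Z̄,W̄) − (n−1)·f²·I(Z,W,Z̄,W̄) ≥ 0, where both terms are real numbers. -/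
open Complex

noncomputable section

namespace RicWedgeAux

open Complex

variable {n : ℕ}

/-- View a vector of `ℂⁿ` as an element of `EuclideanSpace ℂ (Fin n)`. -/
noncomputable def toE (u : Fin n → ℂ) : EuclideanSpace ℂ (Fin n) :=
  (WithLp.equiv 2 (Fin n → ℂ)).symm u

lemma cInner_eq_inner (u v : Fin n → ℂ) :
    cInner u (conjV v) = @inner ℂ _ _ (toE v) (toE u) := by
  simp only [cInner, conjV, toE, PiLp.inner_apply, RCLike.inner_apply,
    WithLp.equiv_symm_apply]

lemma cInner_self_eq (u : Fin n → ℂ) :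
    cInner u (conjV u) = ((‖toE u‖ ^ 2 : ℝ) : ℂ) := by
  rw [cInner_eq_inner, inner_self_eq_norm_sq_to_K]; norm_cast

lemma cInner_norm_le (u v : Fin n → ℂ) :
    ‖cInner u (conjV v)‖ ≤ ‖toE v‖ * ‖toE u‖ := by
  rw [cInner_eq_inner]; exact norm_inner_le_norm _ _

lemma cInner_conj_symm (u v : Fin n → ℂ) :
    cInner u (conjV v) = (starRingEnd ℂ) (cInner v (conjV u)) := by
  simp only [cInner, conjV, map_sum, map_mul, Complex.conj_conj]
  exact Finset.sum_congr rfl fun i _ => mul_comm _ _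

lemma mulVecC_mul (S T : Matrix (Fin n) (Fin n) ℝ) (Z : Fin n → ℂ) :
    mulVecC (S * T) Z = mulVecC S (mulVecC T Z) := by
  funext i
  simp only [mulVecC, Matrix.mul_apply]
  push_cast
  simp only [Finset.sum_mul, Finset.mul_sum]
  rw [Finset.sum_comm]
  exact Finset.sum_congr rfl fun k _ => Finset.sum_congr rfl fun j _ => by ring

lemma adjoint_move (S : Matrix (Fin n) (Fin n) ℝ) (hS : ∀ i k, S i k = S k i)
    (u w : Fin n → ℂ) :
    cInner (mulVecC S u) (conjV w) = cInner u (conjV (mulVecC S w)) := by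
  simp only [cInner, mulVecC, conjV, map_sum, map_mul, Complex.conj_ofReal,
    Finset.sum_mul, Finset.mul_sum]
  rw [Finset.sum_comm]
  refine Finset.sum_congr rfl fun k _ => Finset.sum_congr rfl fun i _ => ?_
  rw [hS i k]; ring

lemma factor (S : Matrix (Fin n) (Fin n) ℝ) (hS : ∀ i k, S i k = S k i)
    (Z w : Fin n → ℂ) :
    cInner (mulVecC (S * S) Z) (conjV w)
      = cInner (mulVecC S Z) (conjV (mulVecC S w)) := by
  rw [mulVecC_mul, adjoint_move S hS]

lemma mulVecC_decomp (B : Matrix (Fin n) (Fin n) ℝ) (c : ℝ) (Z : Fin n → ℂ) :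
    mulVecC (B + c • (1 : Matrix (Fin n) (Fin n) ℝ)) Z
      = fun i => mulVecC B Z i + (c : ℂ) * Z i := by
  funext i
  simp only [mulVecC, Matrix.add_apply, Matrix.smul_apply, Matrix.one_apply,
    smul_eq_mul]
  push_cast
  simp only [add_mul]
  rw [Finset.sum_add_distrib]
  congr 1
  rw [Finset.sum_eq_single i]
  · simp
  · intro b _ hb; simp [Ne.symm hb]
  · intro h; exact absurd (Finset.mem_univ i) h

lemma cInner_add_left (u v w : Fin n → ℂ) :
    cInner (fun i => u i + v i) w = cInner u w + cInner v w := by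
  simp [cInner, add_mul, Finset.sum_add_distrib]

lemma cInner_smul_left (c : ℂ) (u w : Fin n → ℂ) :
    cInner (fun i => c * u i) w = c * cInner u w := by
  simp [cInner, Finset.mul_sum, mul_assoc]

end RicWedgeAux

open RicWedgeAux

/-- if `Ric(R) ≥ (n−1) f` then
`2f (Ric(R) ∧ id) − (n−1) f² I ≥ 0` on `(Z, W, Z̄, W̄)`, both terms being real. -/
theorem ric_wedge_inequality {n : ℕ} (T : AlgCurv n) (f : ℝ) (hf : 0 ≤ f)
    (hric : ∀ X : Fin n → ℝ,
      ((n : ℝ) - 1) * f * rInner X X ≤ rInner ((ricM T).mulVec X) X)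
    (Z W : Fin n → ℂ) :
    ∃ a b : ℝ, wedgeId (ricM T) Z W = (a : ℂ)
      ∧ IC Z W (conjV Z) (conjV W) = (b : ℂ)
      ∧ 0 ≤ 2 * f * a - ((n : ℝ) - 1) * f ^ 2 * b := by
  classical
  rcases Nat.eq_zero_or_pos n with hn | hn
  · subst hn
    refine ⟨0, 0, ?_, ?_, by norm_num⟩
    · simp [wedgeId, cInner]
    · simp [IC, cInner]
  -- main case
  set c : ℝ := ((n : ℝ) - 1) * f with hc_def
  have hc : 0 ≤ c := by
    have : (1 : ℝ) ≤ (n : ℝ) := by exact_mod_cast hn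
    have := sub_nonneg.mpr this
    positivity
  set M : Matrix (Fin n) (Fin n) ℝ := ricM T with hM_def
  have hMsym : ∀ i j, M i j = M j i := by
    intro i j
    simp only [hM_def, ricM, Matrix.of_apply]
    exact Finset.sum_congr rfl fun p _ => T.pair_symm i p j p
  set B : Matrix (Fin n) (Fin n) ℝ := M - c • 1 with hB_def
  have hMB : M = B + c • (1 : Matrix (Fin n) (Fin n) ℝ) := by
    rw [hB_def, sub_add_cancel]
  have hBsym : ∀ i j, B i j = B j i := by
    intro i j
    simp only [hB_def, Matrix.sub_apply, Matrix.smul_apply, Matrix.one_apply,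
      smul_eq_mul, hMsym i j]
    by_cases h : i = j
    · subst h; simp
    · simp [h, Ne.symm h]
  have hB : B.PosSemidef := by
    refine Matrix.PosSemidef.of_dotProduct_mulVec_nonneg ?_ ?_
    · ext i j
      simp only [Matrix.conjTranspose_apply, star_trivial]
      exact hBsym j i
    · intro x
      have hx : star x = x := funext fun i => star_trivial _
      rw [hx]
      have hmv : B.mulVec x = M.mulVec x - c • x := by
        rw [hB_def, Matrix.sub_mulVec, Matrix.smul_mulVec, Matrix.one_mulVec]
      rw [hmv, dotProduct_sub, dotProduct_smul]
      have h1 : dotProduct x (M.mulVec x) = rInner (M.mulVec x) x := by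
        rw [dotProduct_comm]; rfl
      have h2 : dotProduct x x = rInner x x := rfl
      have := hric x
      rw [h1, h2, smul_eq_mul]
      linarith [hric x]
  obtain ⟨S, hSsym, hSS⟩ :
      ∃ S : Matrix (Fin n) (Fin n) ℝ, (∀ i j, S i j = S j i) ∧ S * S = B := by
    open scoped MatrixOrder in
    obtain ⟨X, hX, -, hXX⟩ := CFC.exists_sqrt_of_isSelfAdjoint_of_quasispectrumRestricts
      hB.isHermitian (QuasispectrumRestricts.nnreal_of_nonneg hB.nonneg)
    refine ⟨X, fun i j => ?_, hXX⟩
    have h := congrFun (congrFun hX j) i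
    simpa [Matrix.star_apply, Matrix.conjTranspose_apply] using h
  -- abbreviations
  set SZ := mulVecC S Z with hSZ_def
  set SW := mulVecC S W with hSW_def
  set nZ : ℝ := ‖toE Z‖
  set nW : ℝ := ‖toE W‖
  set nSZ : ℝ := ‖toE SZ‖
  set nSW : ℝ := ‖toE SW‖
  set p : ℂ := cInner SW (conjV SZ) with hp_def
  set q : ℂ := cInner W (conjV Z) with hq_def
  -- values of the B-inner products
  have eBZZ : cInner (mulVecC B Z) (conjV Z) = ((nSZ ^ 2 : ℝ) : ℂ) := by
    rw [← hSS, factor S hSsym, ← hSZ_def, cInner_self_eq]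
  have eBWW : cInner (mulVecC B W) (conjV W) = ((nSW ^ 2 : ℝ) : ℂ) := by
    rw [← hSS, factor S hSsym, ← hSW_def, cInner_self_eq]
  have eBWZ : cInner (mulVecC B W) (conjV Z) = p := by
    rw [← hSS, factor S hSsym, ← hSZ_def, ← hSW_def, hp_def]
  have eBZW : cInner (mulVecC B Z) (conjV W) = (starRingEnd ℂ) p := by
    rw [← hSS, factor S hSsym, ← hSZ_def, ← hSW_def, hp_def, cInner_conj_symm]
  have eZZ : cInner Z (conjV Z) = ((nZ ^ 2 : ℝ) : ℂ) := cInner_self_eq Z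
  have eWW : cInner W (conjV W) = ((nW ^ 2 : ℝ) : ℂ) := cInner_self_eq W
  have eZW : cInner Z (conjV W) = (starRingEnd ℂ) q := by
    rw [hq_def, cInner_conj_symm]
  -- decomposition of M-inner products
  have eM : ∀ u w : Fin n → ℂ,
      cInner (mulVecC M u) (conjV w)
        = cInner (mulVecC B u) (conjV w) + (c : ℂ) * cInner u (conjV w) := by
    intro u w
    rw [hMB, mulVecC_decomp]
    rw [cInner_add_left, cInner_smul_left]
  have hnZ : 0 ≤ nZ := norm_nonneg _
  have hnW : 0 ≤ nW := norm_nonneg _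
  have hnSZ : 0 ≤ nSZ := norm_nonneg _
  have hnSW : 0 ≤ nSW := norm_nonneg _
  have hq_le : ‖q‖ ≤ nZ * nW := cInner_norm_le W Z
  have hp_le : ‖p‖ ≤ nSZ * nSW := cInner_norm_le SW SZ
  clear_value SZ SW nZ nW nSZ nSW p q M B
  -- candidate real values
  set aB : ℝ := (1/2) * (nSZ ^ 2 * nW ^ 2 + nSW ^ 2 * nZ ^ 2) - (p * (starRingEnd ℂ) q).re with haB_def
  set b : ℝ := nZ ^ 2 * nW ^ 2 - Complex.normSq q with hb2_def
  refine ⟨aB + c * b, b, ?_, ?_, ?_⟩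
  · -- wedgeId value
    have hpq : p * (starRingEnd ℂ) q + (starRingEnd ℂ) p * q
        = ((2 * (p * (starRingEnd ℂ) q).re : ℝ) : ℂ) := by
      have h := Complex.add_conj (p * (starRingEnd ℂ) q)
      rw [map_mul, Complex.conj_conj] at h
      rw [h]
    have hqq : q * (starRingEnd ℂ) q = ((Complex.normSq q : ℝ) : ℂ) := Complex.mul_conj q
    have haC : ((aB : ℝ) : ℂ) = (1/2) * ((nSZ:ℂ)^2*(nW:ℂ)^2 + (nSW:ℂ)^2*(nZ:ℂ)^2)
        - (((p * (starRingEnd ℂ) q).re : ℝ) : ℂ) := by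
      rw [haB_def]; push_cast; ring
    have hbC : ((b : ℝ) : ℂ) = (nZ:ℂ)^2*(nW:ℂ)^2 - ((Complex.normSq q : ℝ) : ℂ) := by
      rw [hb2_def]; push_cast; ring
    push_cast at hpq
    unfold wedgeId
    rw [eM Z Z, eM W W, eM W Z, eM Z W]
    rw [eBZZ, eBWW, eBWZ, eBZW, eZZ, eWW, eZW, ← hq_def]
    push_cast
    linear_combination (-(1:ℂ)/2) * hpq - (c:ℂ) * hqq - haC - (c:ℂ) * hbC
  · -- IC value
    unfold IC
    rw [eZZ, eWW, eZW, ← hq_def]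
    have hqq : (starRingEnd ℂ) q * q = ((Complex.normSq q : ℝ) : ℂ) := by
      rw [mul_comm]; exact Complex.mul_conj q
    have hbC : ((b : ℝ) : ℂ) = (nZ:ℂ)^2*(nW:ℂ)^2 - ((Complex.normSq q : ℝ) : ℂ) := by
      rw [hb2_def]; push_cast; ring
    rw [hbC]
    push_cast
    linear_combination - hqq
  · -- the inequality
    have hb_nonneg : 0 ≤ b := by
      have : Complex.normSq q = ‖q‖ ^ 2 := by
        rw [Complex.normSq_eq_norm_sq]
      rw [hb2_def, this]
      nlinarith [norm_nonneg q]
    have hre : (p * (starRingEnd ℂ) q).re ≤ nSZ * nSW * (nZ * nW) := by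
      calc (p * (starRingEnd ℂ) q).re ≤ ‖p * (starRingEnd ℂ) q‖ :=
            Complex.re_le_norm _
        _ = ‖p‖ * ‖q‖ := by
            rw [norm_mul, RCLike.norm_conj]
        _ ≤ (nSZ * nSW) * (nZ * nW) := by
            apply mul_le_mul hp_le hq_le (norm_nonneg _)
            positivity
    have haB_nonneg : 0 ≤ aB := by
      rw [haB_def]
      nlinarith [sq_nonneg (nSZ * nW - nSW * nZ)]
    have hcb : ((n : ℝ) - 1) * f ^ 2 * b = c * f * b := by rw [hc_def]; ring
    rw [hcb]
    nlinarith [mul_nonneg hc hb_nonneg, mul_nonneg hf haB_nonneg,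
      mul_nonneg (mul_nonneg hc hf) hb_nonneg]
end
end
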